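/- arXiv:2306.08327 — 12 statements merged into one kernel-verified Lean document; each statement's English description precedes it below -/
import Mathlib

section
/- Let R be a ring with unity and suppose the set Id(R) of idempotent elements of R is finite. If x ∈ R satisfies 2x ∈ Id(R), then in the idempotent graph G_Id(R) the degree of the vertex x equals |Id(R)| − 1. -/
/-- The idempotent graph of a ring: vertices are ring elements, distinct `x, y`
adjacent iff `x + y` is idempotent. -/
def idemGraph (R : Type*) [Ring R] : SimpleGraph R where
  Adj x y := x ≠ y ∧ IsIdempotentElem (x + y)
  symm := ⟨fun x y ⟨h, hi⟩ => ⟨h.symm, by rwa [add_comm]⟩⟩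
  loopless := ⟨fun x ⟨h, _⟩ => h rfl⟩

/-- The set of idempotent elements of a ring. -/
def idemSet (R : Type*) [Ring R] : Set R := {e : R | IsIdempotentElem e}

theorem stmt0 {R : Type*} [Ring R] (hfin : (idemSet R).Finite) (x : R)
    (hx : x + x ∈ idemSet R) :
    ((idemGraph R).neighborSet x).ncard = (idemSet R).ncard - 1 := by
  have hset : (idemGraph R).neighborSet x = (fun e => e - x) '' (idemSet R \ {x + x}) := by
    ext y
    simp only [SimpleGraph.mem_neighborSet, idemGraph, Set.mem_image, Set.mem_diff,
      Set.mem_singleton_iff, idemSet, Set.mem_setOf_eq]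
    constructor
    · rintro ⟨hne, hid⟩
      exact ⟨x + y, ⟨hid, fun h => hne (add_left_cancel h).symm⟩, by abel⟩
    · rintro ⟨e, ⟨he, hne⟩, rfl⟩
      constructor
      · intro h; exact hne (sub_eq_iff_eq_add.mp h.symm)
      · rwa [show x + (e - x) = e by abel]
  rw [hset, Set.ncard_image_of_injective _ (sub_left_injective),
    Set.ncard_diff_singleton_of_mem hx]
end

section
/- For a ring R with unity, the idempotent graph G_Id(R) is connected if and only if the additive group (R, +) is generated by the set Id(R) of idempotents of R. -/
lemma neg_reach {R : Type*} [Ring R] (z : R) : (idemGraph R).Reachable (-z) z := by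
  by_cases h : (-z : R) = z
  · rw [h]
  · exact SimpleGraph.Adj.reachable ⟨h, by rw [neg_add_cancel]; exact IsIdempotentElem.zero⟩

lemma reach_of_mem {R : Type*} [Ring R] {c : R}
    (hc : c ∈ AddSubgroup.closure (idemSet R)) :
    ∀ y : R, (idemGraph R).Reachable (c - y) y := by
  induction hc using AddSubgroup.closure_induction with
  | mem e he =>
    intro y
    by_cases h : e - y = y
    · rw [h]
    · exact SimpleGraph.Adj.reachable ⟨h, by simpa [idemSet] using he⟩
  | zero =>
    intro y
    simpa using neg_reach y
  | add a b _ _ iha ihb =>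
    intro y
    have h1 : (idemGraph R).Reachable (a - (y - b)) (y - b) := iha (y - b)
    have h2 : (idemGraph R).Reachable (b - y) y := ihb y
    have h3 : (idemGraph R).Reachable (y - b) (b - y) := by
      have := neg_reach (b - y); rwa [neg_sub] at this
    have e1 : a + b - y = a - (y - b) := by abel
    rw [e1]
    exact h1.trans (h3.trans h2)
  | neg a _ iha =>
    intro y
    have h1 : (idemGraph R).Reachable (a - (-y)) (-y) := iha (-y)
    have h2 : (idemGraph R).Reachable (-y) y := neg_reach y
    have h3 : (idemGraph R).Reachable (-(a + y)) (a + y) := neg_reach _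
    have e1 : -a - y = -(a + y) := by abel
    have e2 : a - -y = a + y := by abel
    rw [e1]
    rw [e2] at h1
    exact h3.trans (h1.trans h2)

lemma walk_mem {R : Type*} [Ring R] {u v : R} (w : (idemGraph R).Walk u v) :
    v ∈ AddSubgroup.closure (idemSet R) → u ∈ AddSubgroup.closure (idemSet R) := by
  induction w with
  | nil => exact id
  | @cons a b c h p ih =>
    intro hv
    have hb := ih hv
    have e1 : a = (a + b) - b := by abel
    rw [e1]
    exact sub_mem (AddSubgroup.subset_closure h.2) hb

theorem stmt2 {R : Type*} [Ring R] :
    (idemGraph R).Connected ↔ AddSubgroup.closure (idemSet R) = ⊤ := by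
  constructor
  · intro h
    rw [AddSubgroup.eq_top_iff']
    intro x
    obtain ⟨w⟩ := h.preconnected x 0
    exact walk_mem w (zero_mem _)
  · intro h
    have : Nonempty R := ⟨0⟩
    refine SimpleGraph.Connected.mk fun x y => ?_
    have hmem : x + y ∈ AddSubgroup.closure (idemSet R) := by rw [h]; trivial
    have := reach_of_mem hmem y
    simpa using this
end

section
/- Let R be a finite commutative ring with unity that is isomorphic to a direct product R_1 × R_2 × ⋯ × R_n of n ≥ 4 local rings. Then the idempotent graph G_Id(R) contains K_5 as a subgraph; in particular G_Id(R) is not planar. -/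
theorem stmt3 {n : ℕ} (hn : 4 ≤ n) (R : Fin n → Type*) [∀ i, CommRing (R i)]
    [∀ i, IsLocalRing (R i)] [∀ i, Fintype (R i)] :
    ∃ f : Fin 5 → (∀ i, R i), Function.Injective f ∧
      ∀ i j, i ≠ j → (idemGraph (∀ i, R i)).Adj (f i) (f j) := by
  classical
  have key : ∀ i j : Fin 5, (i : ℕ) - 1 < n ∧ (j : ℕ) - 1 < n := by
    intro i j
    have hi := i.isLt
    have hj := j.isLt
    omega
  set f : Fin 5 → (∀ i, R i) := fun i =>
    if (i : ℕ) = 0 then 0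
    else Pi.single (⟨(i : ℕ) - 1, (key i i).1⟩ : Fin n) 1 with hf
  refine ⟨f, ?_, ?_⟩
  all_goals
    have hsingle : ∀ (k : Fin n), Pi.single (M := R) k 1 ≠ 0 := by
      intro k h
      have := congrFun h k
      rw [Pi.single_eq_same] at this
      exact one_ne_zero this
    have hdist : ∀ (k l : Fin n), k ≠ l →
        Pi.single (M := R) k 1 ≠ Pi.single l 1 := by
      intro k l hkl h
      have := congrFun h k
      rw [Pi.single_eq_same, Pi.single_eq_of_ne hkl] at this
      exact one_ne_zero this
  · intro i j hij
    by_contra hne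
    simp only [hf] at hij
    by_cases h1 : (i : ℕ) = 0 <;> by_cases h2 : (j : ℕ) = 0 <;>
      simp only [h1, h2, if_pos, if_neg, if_true, if_false] at hij
    · exact hne (Fin.ext (by omega))
    · exact hsingle _ hij.symm
    · exact hsingle _ hij
    · refine hdist _ _ (fun h => hne (Fin.ext ?_)) hij
      have := Fin.mk.injEq ((i:ℕ)-1) (key i j).1 ((j:ℕ)-1) (key j j).1 ▸ congrArg Fin.val h
      simp at this
      omega
  · intro i j hij
    have hne : f i ≠ f j := by
      simp only [hf]
      by_cases h1 : (i : ℕ) = 0 <;> by_cases h2 : (j : ℕ) = 0 <;>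
        simp only [h1, h2, if_pos, if_neg, if_true, if_false]
      · exact absurd (Fin.ext (by omega)) hij
      · exact fun h => hsingle _ h.symm
      · exact fun h => hsingle _ h
      · refine hdist _ _ (fun h => ?_)
        have := congrArg Fin.val h
        simp only at this
        exact hij (Fin.ext (by omega))
    refine ⟨hne, ?_⟩
    have hidem : ∀ x : ∀ i, R i, (∀ k, x k = 0 ∨ x k = 1) → IsIdempotentElem x := by
      intro x hx
      funext k
      rcases hx k with h | h <;> rw [Pi.mul_apply, h] <;> simp
    apply hidem
    intro k
    simp only [hf, Pi.add_apply]
    by_cases h1 : (i : ℕ) = 0 <;> by_cases h2 : (j : ℕ) = 0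
    · exact absurd (Fin.ext (by omega)) hij
    · simp only [if_pos h1, if_neg h2, Pi.zero_apply, zero_add]
      by_cases hk : k = (⟨(j:ℕ)-1, (key j j).1⟩ : Fin n)
      · subst hk; rw [Pi.single_eq_same]; right; rfl
      · rw [Pi.single_eq_of_ne hk]; left; rfl
    · simp only [if_pos h2, if_neg h1, Pi.zero_apply, add_zero]
      by_cases hk : k = (⟨(i:ℕ)-1, (key i i).1⟩ : Fin n)
      · subst hk; rw [Pi.single_eq_same]; right; rfl
      · rw [Pi.single_eq_of_ne hk]; left; rfl
    · simp only [if_neg h1, if_neg h2]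
      have hab : (⟨(i:ℕ)-1, (key i i).1⟩ : Fin n) ≠ ⟨(j:ℕ)-1, (key j j).1⟩ := by
        intro h
        have := congrArg Fin.val h
        simp only at this
        exact hij (Fin.ext (by omega))
      by_cases hk : k = (⟨(i:ℕ)-1, (key i i).1⟩ : Fin n)
      · subst hk
        rw [Pi.single_eq_same, Pi.single_eq_of_ne hab, add_zero]
        right; rfl
      · rw [Pi.single_eq_of_ne hk, zero_add]
        by_cases hk2 : k = (⟨(j:ℕ)-1, (key j j).1⟩ : Fin n)
        · subst hk2; rw [Pi.single_eq_same]; right; rfl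
        · rw [Pi.single_eq_of_ne hk2]; left; rfl
end

section
/- Let R be a finite non-local commutative ring with unity. Then G_Id(R) is a split graph if and only if R is isomorphic to a finite direct product Z_2 × Z_2 × ⋯ × Z_2. -/
/-- A split graph: vertices partition into a clique and an independent set. -/
def IsSplitGraph {V : Type*} (G : SimpleGraph V) : Prop :=
  ∃ C I : Set V, Disjoint C I ∧ C ∪ I = Set.univ ∧ G.IsClique C ∧
    I.Pairwise (fun a b => ¬ G.Adj a b)

/-- A cograph: no induced path on four vertices. -/
def IsCograph {V : Type*} (G : SimpleGraph V) : Prop :=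
  ¬ ∃ a b c d : V, a ≠ c ∧ a ≠ d ∧ b ≠ d ∧
    G.Adj a b ∧ G.Adj b c ∧ G.Adj c d ∧ ¬ G.Adj a c ∧ ¬ G.Adj a d ∧ ¬ G.Adj b d

section Helpers

variable {R : Type*} [CommRing R]

lemma idemGraph_adj_iff {x y : R} :
    (idemGraph R).Adj x y ↔ x ≠ y ∧ (x + y) * (x + y) = x + y := Iff.rfl

/-- In a finite commutative monoid, some positive power of any element is idempotent. -/
lemma exists_idem_pow {M : Type*} [CommMonoid M] [Finite M] (x : M) :
    ∃ n : ℕ, 0 < n ∧ x ^ n * x ^ n = x ^ n := by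
  obtain ⟨a, b, hab, heq0⟩ := Finite.exists_ne_map_eq_of_infinite (fun n : ℕ => x ^ n)
  have heq : x ^ a = x ^ b := heq0
  clear heq0
  wlog hlt : a < b generalizing a b
  · exact this b a hab.symm heq.symm (by omega)
  set m := a with hm
  set d := b - a with hd
  have hd0 : 0 < d := by omega
  have hmb : m + d = b := by omega
  have step : ∀ j, x ^ (m + j + d) = x ^ (m + j) := by
    intro j
    have h1 : x ^ (m + j + d) = x ^ j * x ^ (m + d) := by
      rw [← pow_add]; congr 1; omega
    have h2 : x ^ (m + j) = x ^ j * x ^ m := by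
      rw [← pow_add]; congr 1; omega
    rw [h1, hmb, ← heq, h2]
  have iter : ∀ k j, x ^ (m + j + k * d) = x ^ (m + j) := by
    intro k
    induction k with
    | zero => intro j; simp
    | succ k ih =>
      intro j
      have h3 : m + j + (k + 1) * d = m + (j + d) + k * d := by ring
      have h4 : m + (j + d) = m + j + d := by ring
      rw [h3, ih (j + d), h4, step j]
  refine ⟨(m + 1) * d, Nat.mul_pos (Nat.succ_pos m) hd0, ?_⟩
  have hge : m + 1 ≤ (m + 1) * d := Nat.le_mul_of_pos_right _ hd0
  rw [← pow_add]
  have h3 : (m + 1) * d + (m + 1) * d = m + ((m + 1) * d - m) + (m + 1) * d := by omega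
  have h4 : m + ((m + 1) * d - m) = (m + 1) * d := by omega
  rw [h3, iter (m + 1) _, h4]

/-- Core obstruction: if `e` is a nonzero idempotent and `t` is a non-idempotent
element with `(1-e)t = t`, then the idempotent graph contains an induced `2K₂`,
hence is not split. -/
lemma no_split (e t : R) (he : e * e = e) (he0 : e ≠ 0) (ht : t * t ≠ t)
    (hft : (1 - e) * t = t) : ¬ IsSplitGraph (idemGraph R) := by
  have het : e * t = 0 := by linear_combination -hft
  rintro ⟨C, I, hdis, huni, hcl, hind⟩
  have memCI : ∀ x : R, x ∈ C ∨ x ∈ I := fun x =>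
    (huni ▸ Set.mem_univ x : x ∈ C ∪ I)
  have key : ∀ x y : R, (idemGraph R).Adj x y → x ∈ C ∨ y ∈ C := by
    intro x y hxy
    rcases memCI x with hx | hx
    · exact Or.inl hx
    rcases memCI y with hy | hy
    · exact Or.inr hy
    exact absurd hxy (hind hx hy hxy.1)
  have adj12 : (idemGraph R).Adj 0 e :=
    idemGraph_adj_iff.mpr ⟨fun h => he0 h.symm, by linear_combination he⟩
  have adj34 : (idemGraph R).Adj t (1 - t) := by
    refine idemGraph_adj_iff.mpr ⟨fun h => he0 ?_, by ring⟩
    linear_combination 2 * het - e * h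
  have n13 : ¬ (idemGraph R).Adj 0 t := fun h =>
    ht (by linear_combination (idemGraph_adj_iff.mp h).2)
  have n14 : ¬ (idemGraph R).Adj 0 (1 - t) := fun h =>
    ht (by linear_combination (idemGraph_adj_iff.mp h).2)
  have n23 : ¬ (idemGraph R).Adj e t := fun h =>
    ht (by linear_combination (idemGraph_adj_iff.mp h).2 - he - 2 * het)
  have n24 : ¬ (idemGraph R).Adj e (1 - t) := by
    intro h
    have h2 : t * t = t - 2 * e := by
      linear_combination (idemGraph_adj_iff.mp h).2 - he + 2 * het
    exact ht (by linear_combination (1 - e) * h2 - t * hft - het + 2 * he)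
  have d13 : (0 : R) ≠ t := fun h => ht (by rw [← h]; ring)
  have d14 : (0 : R) ≠ 1 - t := fun h => ht (by linear_combination t * h)
  have d23 : e ≠ t := fun h => ht (by linear_combination he - (e + t - 1) * h)
  have d24 : e ≠ 1 - t := fun h => ht (by linear_combination he + (t - e) * h)
  rcases key _ _ adj12 with h1 | h1 <;> rcases key _ _ adj34 with h2 | h2
  · exact n13 (hcl h1 h2 d13)
  · exact n14 (hcl h1 h2 d14)
  · exact n23 (hcl h1 h2 d23)
  · exact n24 (hcl h1 h2 d24)

end Helpers

theorem stmt6 {R : Type*} [CommRing R] [Fintype R]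
    (hnonlocal : ∃ m₁ m₂ : Ideal R, m₁.IsMaximal ∧ m₂.IsMaximal ∧ m₁ ≠ m₂) :
    IsSplitGraph (idemGraph R) ↔
      ∃ n : ℕ, Nonempty (R ≃+* (Fin n → ZMod 2)) := by
  classical
  obtain ⟨m₁, m₂, h₁, h₂, hne⟩ := hnonlocal
  haveI : Nontrivial R := by
    rcases subsingleton_or_nontrivial R with h | h
    · exact absurd (Subsingleton.elim m₁ ⊤) h₁.ne_top
    · exact h
  obtain ⟨x, hx1, hx2⟩ : ∃ x, x ∈ m₁ ∧ x ∉ m₂ := by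
    by_contra h
    push_neg at h
    exact hne (h₁.eq_of_le h₂.ne_top h)
  obtain ⟨n0, hn0, he⟩ := exists_idem_pow x
  set e := x ^ n0 with hedef
  have he0 : e ≠ 0 := by
    intro h
    have hmem : e ∈ m₂ := h ▸ m₂.zero_mem
    exact hx2 (h₂.isPrime.mem_of_pow_mem n0 hmem)
  have he1 : e ≠ 1 := by
    intro h
    have hmem : e ∈ m₁ := m₁.pow_mem_of_mem hx1 n0 hn0
    exact h₁.ne_top ((Ideal.eq_top_iff_one m₁).mpr (h ▸ hmem))
  constructor
  · intro hsplit
    -- every element is idempotent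
    have hb : ∀ a : R, a * a = a := by
      intro a
      by_contra ha
      by_cases hfa : ((1 - e) * a) * ((1 - e) * a) = (1 - e) * a
      · have hea : (e * a) * (e * a) ≠ e * a := by
          intro heq
          exact ha (by linear_combination heq + hfa - 2 * a * a * he)
        exact no_split (1 - e) (e * a) (by linear_combination he)
          (sub_ne_zero.mpr (Ne.symm he1)) hea (by linear_combination a * he) hsplit
      · exact no_split e ((1 - e) * a) he he0 hfa (by linear_combination a * he) hsplit
    haveI : IsArtinianRing R := isArtinian_of_finite
    haveI : IsReduced R := by
      constructor
      intro y hy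
      obtain ⟨k, hk⟩ := hy
      have hpow : ∀ m : ℕ, y ^ (m + 1) = y := by
        intro m
        induction m with
        | zero => simp
        | succ m ih => rw [pow_succ, ih, hb]
      cases k with
      | zero =>
        rw [pow_zero] at hk
        exact absurd hk one_ne_zero
      | succ k => rw [← hpow k, hk]
    haveI : Finite {I : Ideal R | I.IsMaximal} := (IsArtinianRing.setOfPred_isMaximal_finite R).to_subtype
    have hQ : ∀ I : {I : Ideal R | I.IsMaximal}, Nonempty ((R ⧸ I.1) ≃+* ZMod 2) := by
      intro I
      haveI hImax : I.1.IsMaximal := I.2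
      haveI : I.1.IsPrime := hImax.isPrime
      haveI : Nontrivial (R ⧸ I.1) := Ideal.Quotient.nontrivial_iff.mpr hImax.ne_top
      letI : Fintype (R ⧸ I.1) := Fintype.ofFinite _
      have h01 : ∀ y : R ⧸ I.1, y = 0 ∨ y = 1 := by
        intro y
        obtain ⟨a, rfl⟩ := Ideal.Quotient.mk_surjective y
        have hy : (Ideal.Quotient.mk I.1 a) * (Ideal.Quotient.mk I.1 a) =
            Ideal.Quotient.mk I.1 a := by
          rw [← map_mul, hb a]
        have h2 : (Ideal.Quotient.mk I.1 a) * ((Ideal.Quotient.mk I.1 a) - 1) = 0 := by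
          linear_combination hy
        rcases mul_eq_zero.mp h2 with h | h
        · exact Or.inl h
        · exact Or.inr (by linear_combination h)
      have hcard : Fintype.card (R ⧸ I.1) = 2 := by
        rw [← Nat.card_eq_fintype_card]
        refine Nat.card_eq_two_iff.mpr ⟨0, 1, zero_ne_one, ?_⟩
        refine Set.eq_univ_iff_forall.mpr fun y => ?_
        rcases h01 y with h | h <;> simp [h]
      exact ⟨(ZMod.ringEquivOfPrime _ Nat.prime_two hcard).symm⟩
    obtain ⟨n, ⟨eFin⟩⟩ := Finite.exists_equiv_fin (MaximalSpectrum R)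
    exact ⟨n, ⟨((IsArtinianRing.equivPi R).toRingEquiv.trans
      (RingEquiv.piCongrRight fun I => Classical.choice (hQ ⟨I.asIdeal, I.isMaximal⟩))).trans
      (RingEquiv.piCongrLeft' (fun _ => ZMod 2) eFin)⟩⟩
  · rintro ⟨n, ⟨φ⟩⟩
    have hb : ∀ a : R, a * a = a := by
      intro a
      apply φ.injective
      rw [map_mul]
      funext i
      simp only [Pi.mul_apply]
      exact (by decide : ∀ z : ZMod 2, z * z = z) (φ a i)
    refine ⟨Set.univ, ∅, Set.disjoint_empty _, by simp, ?_, Set.pairwise_empty _⟩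
    intro x _ y _ hxy
    exact idemGraph_adj_iff.mpr ⟨hxy, hb _⟩
end

section
/- Let R ≅ R_1 × R_2 × ⋯ × R_n (n ≥ 2) be a finite commutative ring with unity where each R_i is a local ring of characteristic 2. Then the idempotent graph G_Id(R) contains no induced path on 4 vertices, i.e., G_Id(R) is a cograph. -/
lemma idem_local {S : Type*} [CommRing S] [IsLocalRing S] {e : S}
    (he : IsIdempotentElem e) : e = 0 ∨ e = 1 := by
  rcases IsLocalRing.isUnit_or_isUnit_one_sub_self e with h | h
  · right
    have h1 : e * (e - 1) = e * 0 := by rw [mul_sub, he.eq, mul_one, sub_self, mul_zero]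
    have := h.mul_left_cancel h1
    linear_combination this
  · left
    have h1 : (1 - e) * e = (1 - e) * 0 := by rw [sub_mul, he.eq, one_mul, sub_self, mul_zero]
    exact h.mul_left_cancel h1

theorem stmt7 {n : ℕ} (hn : 2 ≤ n) (R : Fin n → Type*) [∀ i, CommRing (R i)]
    [∀ i, IsLocalRing (R i)] [∀ i, Fintype (R i)]
    (hchar : ∀ i, (1 : R i) + 1 = 0) :
    IsCograph (idemGraph (∀ i, R i)) := by
  rintro ⟨a, b, c, d, hac, had, hbd, hab, hbc, hcd, nac, nad, nbd⟩
  apply nac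
  refine ⟨hac, ?_⟩
  have hab' := hab.2
  have hbc' := hbc.2
  show (a + c) * (a + c) = a + c
  funext i
  have h1 : IsIdempotentElem (a i + b i) := by
    have := congrFun hab'.eq i
    simpa [IsIdempotentElem] using this
  have h2 : IsIdempotentElem (b i + c i) := by
    have := congrFun hbc'.eq i
    simpa [IsIdempotentElem] using this
  have key : a i + c i = (a i + b i) + (b i + c i) := by
    have : (1 + 1) * b i = 0 := by rw [hchar i, zero_mul]
    linear_combination -this
  have : IsIdempotentElem (a i + c i) := by
    rw [key]
    rcases idem_local h1 with h | h <;> rcases idem_local h2 with h' | h' <;>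
      rw [h, h'] <;> simp [IsIdempotentElem] <;> linear_combination hchar i
  simpa using this.eq
end

section
/- Let R ≅ Z_3 × R_2 × ⋯ × R_n where each R_i (2 ≤ i ≤ n) is a finite local commutative ring of characteristic 2. Then G_Id(R) contains no induced path on 4 vertices, i.e., G_Id(R) is a cograph. -/
private lemma char2_idem_add {S : Type*} [CommRing S] (h2 : (1:S) + 1 = 0)
    {e f : S} (he : IsIdempotentElem e) (hf : IsIdempotentElem f) :
    IsIdempotentElem (e + f) := by
  unfold IsIdempotentElem at *
  have h : (e + f) * (e + f) = e * e + f * f + (1 + 1) * (e * f) := by ring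
  rw [h, h2, he, hf]; ring

theorem stmt8 {m : ℕ} (hm : 1 ≤ m) (R : Fin m → Type*) [∀ i, CommRing (R i)]
    [∀ i, IsLocalRing (R i)] [∀ i, Fintype (R i)]
    (hchar : ∀ i, (1 : R i) + 1 = 0) :
    IsCograph (idemGraph (ZMod 3 × (∀ i, R i))) := by
  rintro ⟨a, b, c, d, hac, had, hbd, ⟨-, iab⟩, ⟨-, ibc⟩, ⟨-, icd⟩, nac, nad, nbd⟩
  -- componentwise idempotency of edge sums
  have fst : ∀ {p : ZMod 3 × (∀ i, R i)}, IsIdempotentElem p →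
      IsIdempotentElem p.1 := fun h => congrArg Prod.fst h
  have snd : ∀ {p : ZMod 3 × (∀ i, R i)} (i : Fin m), IsIdempotentElem p →
      IsIdempotentElem (p.2 i) := fun i h => congrFun (congrArg Prod.snd h) i
  -- in each char-2 component, sums along the path components are idempotent
  have key : ∀ i, IsIdempotentElem (a.2 i + c.2 i) := by
    intro i
    have h := char2_idem_add (hchar i) (snd i iab) (snd i ibc)
    simp only [Prod.snd_add, Pi.add_apply] at h
    have he : (a.2 i + b.2 i) + (b.2 i + c.2 i) = a.2 i + c.2 i + (1+1) * b.2 i := by ring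
    rwa [he, hchar i, zero_mul, add_zero] at h
  have key2 : ∀ i, IsIdempotentElem (a.2 i + d.2 i) := by
    intro i
    have h := char2_idem_add (hchar i) (key i) (snd i icd)
    simp only [Prod.snd_add, Pi.add_apply] at h
    have he : (a.2 i + c.2 i) + (c.2 i + d.2 i) = a.2 i + d.2 i + (1+1) * c.2 i := by ring
    rwa [he, hchar i, zero_mul, add_zero] at h
  have key3 : ∀ i, IsIdempotentElem (b.2 i + d.2 i) := by
    intro i
    have h := char2_idem_add (hchar i) (snd i ibc) (snd i icd)
    simp only [Prod.snd_add, Pi.add_apply] at h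
    have he : (b.2 i + c.2 i) + (c.2 i + d.2 i) = b.2 i + d.2 i + (1+1) * c.2 i := by ring
    rwa [he, hchar i, zero_mul, add_zero] at h
  -- non-adjacency forces failure in the ZMod 3 coordinate
  have mk : ∀ {x y : ZMod 3 × (∀ i, R i)}, IsIdempotentElem (x.1 + y.1) →
      (∀ i, IsIdempotentElem (x.2 i + y.2 i)) → IsIdempotentElem (x + y) := by
    intro x y h1 h2
    exact Prod.ext h1 (funext fun i => h2 i)
  have nac1 : ¬ IsIdempotentElem (a.1 + c.1) := fun h => nac ⟨hac, mk h key⟩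
  have nad1 : ¬ IsIdempotentElem (a.1 + d.1) := fun h => nad ⟨had, mk h key2⟩
  have nbd1 : ¬ IsIdempotentElem (b.1 + d.1) := fun h => nbd ⟨hbd, mk h key3⟩
  have iab1 := fst iab
  have ibc1 := fst ibc
  have icd1 := fst icd
  simp only [Prod.fst_add] at iab1 ibc1 icd1
  revert iab1 ibc1 icd1 nac1 nad1 nbd1
  generalize a.1 = x; generalize b.1 = y; generalize c.1 = z; generalize d.1 = w
  revert x y z w
  simp only [IsIdempotentElem]
  decide
end

section
/- Let R be a finite commutative ring with unity such that R ≅ R_1 × R_2 × R_3 with each R_i local and char(R_1) = char(R_2) = 2. Then G_Id(R) contains K_5 as a subgraph (on the five vertices (a_1,b_1,0), (a_1,b_2,0), (a_2,b_1,0), (a_2,b_2,0), (a_1,b_1,1) where a_1,a_2 ∈ R_1 and b_1,b_2 ∈ R_2 are distinct elements with a_i + a_j ∈ Id(R_1) and b_i + b_j ∈ Id(R_2) for all i, j); in particular G_Id(R) is not planar. -/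
theorem stmt11 {R₁ R₂ R₃ : Type*} [CommRing R₁] [CommRing R₂] [CommRing R₃]
    [IsLocalRing R₁] [IsLocalRing R₂] [IsLocalRing R₃]
    [Fintype R₁] [Fintype R₂] [Fintype R₃]
    (hc1 : (1 : R₁) + 1 = 0) (hc2 : (1 : R₂) + 1 = 0)
    (a1 a2 : R₁) (b1 b2 : R₂) (ha : a1 ≠ a2) (hb : b1 ≠ b2)
    (haI : ∀ x ∈ ({a1, a2} : Set R₁), ∀ y ∈ ({a1, a2} : Set R₁),
      IsIdempotentElem (x + y))
    (hbI : ∀ x ∈ ({b1, b2} : Set R₂), ∀ y ∈ ({b1, b2} : Set R₂),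
      IsIdempotentElem (x + y)) :
    ∃ f : Fin 5 → R₁ × R₂ × R₃,
      f 0 = (a1, b1, 0) ∧ f 1 = (a1, b2, 0) ∧ f 2 = (a2, b1, 0) ∧
      f 3 = (a2, b2, 0) ∧ f 4 = (a1, b1, 1) ∧ Function.Injective f ∧
      ∀ i j, i ≠ j → (idemGraph (R₁ × R₂ × R₃)).Adj (f i) (f j) := by
  have hne : ∀ i j : Fin 5, i ≠ j →
      (![(a1, b1, (0:R₃)), (a1, b2, 0), (a2, b1, 0), (a2, b2, 0), (a1, b1, 1)] i) ≠
      (![(a1, b1, (0:R₃)), (a1, b2, 0), (a2, b1, 0), (a2, b2, 0), (a1, b1, 1)] j) := by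
    intro i j hij
    fin_cases i <;> fin_cases j <;>
      simp_all [Prod.ext_iff, ha, hb, ha.symm, hb.symm]
  refine ⟨![(a1, b1, 0), (a1, b2, 0), (a2, b1, 0), (a2, b2, 0), (a1, b1, 1)],
    rfl, rfl, rfl, rfl, rfl, fun i j h => by_contra fun hij => hne i j hij h, ?_⟩
  · have h11 : IsIdempotentElem (a1 + a1) := haI a1 (by simp) a1 (by simp)
    have h12 : IsIdempotentElem (a1 + a2) := haI a1 (by simp) a2 (by simp)
    have h22 : IsIdempotentElem (a2 + a2) := haI a2 (by simp) a2 (by simp)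
    have k11 : IsIdempotentElem (b1 + b1) := hbI b1 (by simp) b1 (by simp)
    have k12 : IsIdempotentElem (b1 + b2) := hbI b1 (by simp) b2 (by simp)
    have k22 : IsIdempotentElem (b2 + b2) := hbI b2 (by simp) b2 (by simp)
    have z00 : IsIdempotentElem ((0 : R₃)) := by simp [IsIdempotentElem]
    have z01 : IsIdempotentElem ((1 : R₃)) := by simp [IsIdempotentElem]
    have h21 : IsIdempotentElem (a2 + a1) := by rwa [add_comm]
    have k21 : IsIdempotentElem (b2 + b1) := by rwa [add_comm]
    have prodI : ∀ (x : R₁) (y : R₂) (z : R₃), IsIdempotentElem x →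
        IsIdempotentElem y → IsIdempotentElem z →
        IsIdempotentElem ((x, y, z) : R₁ × R₂ × R₃) := by
      intro x y z hx hy hz
      show ((x*x, y*y, z*z) : R₁ × R₂ × R₃) = (x, y, z)
      rw [hx, hy, hz]
    intro i j hij
    refine ⟨hne i j hij, ?_⟩
    clear hne
    fin_cases i <;> fin_cases j <;>
      (first | exact absurd rfl hij | simp [Prod.mk_add_mk]) <;>
      first
        | exact prodI _ _ _ h11 k11 z00 | exact prodI _ _ _ h11 k12 z00
        | exact prodI _ _ _ h11 k21 z00 | exact prodI _ _ _ h11 k22 z00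
        | exact prodI _ _ _ h12 k11 z00 | exact prodI _ _ _ h12 k12 z00
        | exact prodI _ _ _ h12 k21 z00 | exact prodI _ _ _ h12 k22 z00
        | exact prodI _ _ _ h21 k11 z00 | exact prodI _ _ _ h21 k12 z00
        | exact prodI _ _ _ h21 k21 z00 | exact prodI _ _ _ h21 k22 z00
        | exact prodI _ _ _ h22 k11 z00 | exact prodI _ _ _ h22 k12 z00
        | exact prodI _ _ _ h22 k21 z00 | exact prodI _ _ _ h22 k22 z00
        | exact prodI _ _ _ h11 k11 z01 | exact prodI _ _ _ h11 k12 z01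
        | exact prodI _ _ _ h11 k21 z01 | exact prodI _ _ _ h12 k11 z01
        | exact prodI _ _ _ h12 k21 z01 | exact prodI _ _ _ h21 k11 z01
        | exact prodI _ _ _ h21 k12 z01 | exact prodI _ _ _ h22 k11 z01
        | exact prodI _ _ _ h21 k21 z01 | exact prodI _ _ _ h12 k12 z01
end

section
/- Let R = Z_2 × Z_4. Then the idempotent graph G_Id(R) is planar. -/
/-- `G` contains a subdivision of `H`: branch vertices joined by internally
disjoint paths. -/
def ContainsSubdivision {V W : Type*} (G : SimpleGraph V) (H : SimpleGraph W) : Prop :=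
  ∃ (b : W → V) (P : ∀ u v : W, H.Adj u v → G.Walk (b u) (b v)),
    Function.Injective b ∧
    (∀ u v (h : H.Adj u v), (P u v h).IsPath) ∧
    (∀ u v (h : H.Adj u v) (w : W), b w ∈ (P u v h).support → w = u ∨ w = v) ∧
    (∀ u v u' v' (h : H.Adj u v) (h' : H.Adj u' v'), s(u, v) ≠ s(u', v') →
      ∀ x, x ∈ (P u v h).support → x ∈ (P u' v' h').support →
        x ∈ ({b u, b v} : Set V) ∩ {b u', b v'})

/-- Planarity via the Kuratowski criterion: no subdivision of `K₅` or `K₃,₃`. -/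
def IsPlanar {V : Type*} (G : SimpleGraph V) : Prop :=
  ¬ ContainsSubdivision G (SimpleGraph.completeGraph (Fin 5)) ∧
  ¬ ContainsSubdivision G (completeBipartiteGraph (Fin 3) (Fin 3))

/-- Outerplanarity via the forbidden-subdivision criterion: no subdivision of
`K₄` or `K₂,₃`. -/
def IsOuterplanar {V : Type*} (G : SimpleGraph V) : Prop :=
  ¬ ContainsSubdivision G (SimpleGraph.completeGraph (Fin 4)) ∧
  ¬ ContainsSubdivision G (completeBipartiteGraph (Fin 2) (Fin 3))

namespace Stmt12Aux

abbrev V8 := ZMod 2 × ZMod 4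
abbrev GG := idemGraph V8
abbrev K := Fin 3 ⊕ Fin 3
abbrev H33 := completeBipartiteGraph (Fin 3) (Fin 3)
abbrev H5 := SimpleGraph.completeGraph (Fin 5)

instance : DecidableRel GG.Adj :=
  fun x y => inferInstanceAs (Decidable (x ≠ y ∧ (x+y)*(x+y) = x+y))
instance : DecidableRel H33.Adj := fun x y =>
  inferInstanceAs (Decidable (x.isLeft ∧ y.isRight ∨ x.isRight ∧ y.isLeft))
instance : DecidableRel H5.Adj := fun x y => inferInstanceAs (Decidable (x ≠ y))

def U1 : V8 := (0,0)
def U2 : V8 := (1,0)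
def Vv1 : V8 := (0,1)
def Vv2 : V8 := (1,1)
def W1 : V8 := (0,3)
def W2 : V8 := (1,3)
def X1 : V8 := (0,2)
def X2 : V8 := (1,2)

lemma nU1 : ∀ y, GG.Adj U1 y → y = U2 ∨ y = Vv1 ∨ y = Vv2 := by decide
lemma nU2 : ∀ y, GG.Adj U2 y → y = U1 ∨ y = Vv1 ∨ y = Vv2 := by decide
lemma nX1 : ∀ y, GG.Adj X1 y → y = X2 ∨ y = W1 ∨ y = W2 := by decide
lemma nX2 : ∀ y, GG.Adj X2 y → y = X1 ∨ y = W1 ∨ y = W2 := by decide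
lemma tri_free : ∀ a b c : K, H33.Adj a b → H33.Adj b c → H33.Adj a c → False := by decide
lemma nbrs_spec : ∀ p : K, ∃ t1 t2 t3 : K, H33.Adj p t1 ∧ H33.Adj p t2 ∧ H33.Adj p t3 ∧
    t1 ≠ t2 ∧ t1 ≠ t3 ∧ t2 ≠ t3 := by decide
lemma deg_class : ∀ x : V8, 4 ≤ GG.degree x → x = Vv1 ∨ x = Vv2 ∨ x = W1 ∨ x = W2 := by decide
lemma nbrs5 : ∀ p : Fin 5, H5.Adj p (p+1) ∧ H5.Adj p (p+2) ∧ H5.Adj p (p+3) ∧ H5.Adj p (p+4) ∧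
    p+1 ≠ p+2 ∧ p+1 ≠ p+3 ∧ p+1 ≠ p+4 ∧ p+2 ≠ p+3 ∧ p+2 ≠ p+4 ∧ p+3 ≠ p+4 := by decide

lemma walk_cons {V : Type*} {G : SimpleGraph V} {x y : V} (w : G.Walk x y) (h : x ≠ y) :
    ∃ (z : V) (ha : G.Adj x z) (w' : G.Walk z y), w = SimpleGraph.Walk.cons ha w' := by
  cases w with
  | nil => exact absurd rfl h
  | cons ha w' => exact ⟨_, ha, w', rfl⟩

lemma three_cover {α : Type*} {s1 s2 s3 c1 c2 c3 y : α}
    (h12 : s1 ≠ s2) (h13 : s1 ≠ s3) (h23 : s2 ≠ s3)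
    (m1 : s1 = c1 ∨ s1 = c2 ∨ s1 = c3) (m2 : s2 = c1 ∨ s2 = c2 ∨ s2 = c3)
    (m3 : s3 = c1 ∨ s3 = c2 ∨ s3 = c3)
    (hy : y = c1 ∨ y = c2 ∨ y = c3) : y = s1 ∨ y = s2 ∨ y = s3 := by
  rcases m1 with rfl | rfl | rfl <;> rcases m2 with rfl | rfl | rfl <;>
    rcases m3 with rfl | rfl | rfl <;> tauto

open SimpleGraph Walk

theorem noK33 : ¬ ContainsSubdivision GG H33 := by
  rintro ⟨b, P, hinj, hpath, hbranch, hdisj⟩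
  have key : ∀ (p t t' : K) (ht : H33.Adj p t) (ht' : H33.Adj p t'), t ≠ t' →
      ∀ z, z ∈ (P p t ht).support → z ∈ (P p t' ht').support → z ≠ b p → False := by
    intro p t t' ht ht' htt' z hz hz' hzp
    have hsym : s(p,t) ≠ s(p,t') := by
      intro hs
      rcases Sym2.eq_iff.mp hs with ⟨-, h⟩ | ⟨h1, -⟩
      · exact htt' h
      · exact ht'.ne h1
    obtain ⟨hA, hB⟩ := hdisj p t p t' ht ht' hsym z hz hz'
    simp only [Set.mem_insert_iff, Set.mem_singleton_iff] at hA hB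
    rcases hA with hA | hA
    · exact hzp hA
    rcases hB with hB | hB
    · exact hzp hB
    exact htt' (hinj (hA.symm.trans hB))
  -- `adjOf`: branch vertices of G-degree 3 adjacent in G have adjacent preimages
  have adjOf : ∀ (p q : K) (c1 c2 c3 : V8),
      (∀ y, GG.Adj (b p) y → y = c1 ∨ y = c2 ∨ y = c3) →
      GG.Adj (b p) (b q) → H33.Adj p q := by
    intro p q c1 c2 c3 hN hadj
    obtain ⟨t1, t2, t3, ha1, ha2, ha3, e12, e13, e23⟩ := nbrs_spec p
    obtain ⟨s1, g1, q1, hq1⟩ := walk_cons (P p t1 ha1) (hinj.ne ha1.ne)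
    obtain ⟨s2, g2, q2, hq2⟩ := walk_cons (P p t2 ha2) (hinj.ne ha2.ne)
    obtain ⟨s3, g3, q3, hq3⟩ := walk_cons (P p t3 ha3) (hinj.ne ha3.ne)
    have ms1 : s1 ∈ (P p t1 ha1).support := by
      rw [hq1, support_cons]; exact List.mem_cons_of_mem _ q1.start_mem_support
    have ms2 : s2 ∈ (P p t2 ha2).support := by
      rw [hq2, support_cons]; exact List.mem_cons_of_mem _ q2.start_mem_support
    have ms3 : s3 ∈ (P p t3 ha3).support := by
      rw [hq3, support_cons]; exact List.mem_cons_of_mem _ q3.start_mem_support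
    have d12 : s1 ≠ s2 := fun h => key p t1 t2 ha1 ha2 e12 s1 ms1 (by rw [h]; exact ms2) g1.ne'
    have d13 : s1 ≠ s3 := fun h => key p t1 t3 ha1 ha3 e13 s1 ms1 (by rw [h]; exact ms3) g1.ne'
    have d23 : s2 ≠ s3 := fun h => key p t2 t3 ha2 ha3 e23 s2 ms2 (by rw [h]; exact ms3) g2.ne'
    have hbq := three_cover d12 d13 d23 (hN s1 g1) (hN s2 g2) (hN s3 g3) (hN (b q) hadj)
    have hqp : q ≠ p := fun h => GG.loopless.irrefl (b p) (by rw [h] at hadj; exact hadj)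
    rcases hbq with h | h | h
    · rcases hbranch p t1 ha1 q (by rw [h]; exact ms1) with h' | h'
      · exact absurd h' hqp
      · subst h'; exact ha1
    · rcases hbranch p t2 ha2 q (by rw [h]; exact ms2) with h' | h'
      · exact absurd h' hqp
      · subst h'; exact ha2
    · rcases hbranch p t3 ha3 q (by rw [h]; exact ms3) with h' | h'
      · exact absurd h' hqp
      · subst h'; exact ha3
  -- `stepB`: contradiction when a degree-3 branch vertex has a non-branch
  -- degree-3 neighbour sharing its other two neighbours
  have stepB : ∀ (p : K) (a a' c d : V8), b p = a → (∀ t, b t ≠ a') →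
      (∀ y, GG.Adj a y → y = a' ∨ y = c ∨ y = d) →
      (∀ y, GG.Adj a' y → y = a ∨ y = c ∨ y = d) → False := by
    intro p a a' c d hba hnot hNa hNa'
    obtain ⟨t1, t2, t3, ha1, ha2, ha3, e12, e13, e23⟩ := nbrs_spec p
    obtain ⟨s1, g1, q1, hq1⟩ := walk_cons (P p t1 ha1) (hinj.ne ha1.ne)
    obtain ⟨s2, g2, q2, hq2⟩ := walk_cons (P p t2 ha2) (hinj.ne ha2.ne)
    obtain ⟨s3, g3, q3, hq3⟩ := walk_cons (P p t3 ha3) (hinj.ne ha3.ne)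
    have ms1 : s1 ∈ (P p t1 ha1).support := by
      rw [hq1, support_cons]; exact List.mem_cons_of_mem _ q1.start_mem_support
    have ms2 : s2 ∈ (P p t2 ha2).support := by
      rw [hq2, support_cons]; exact List.mem_cons_of_mem _ q2.start_mem_support
    have ms3 : s3 ∈ (P p t3 ha3).support := by
      rw [hq3, support_cons]; exact List.mem_cons_of_mem _ q3.start_mem_support
    have d12 : s1 ≠ s2 := fun h => key p t1 t2 ha1 ha2 e12 s1 ms1 (by rw [h]; exact ms2) g1.ne'
    have d13 : s1 ≠ s3 := fun h => key p t1 t3 ha1 ha3 e13 s1 ms1 (by rw [h]; exact ms3) g1.ne'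
    have d23 : s2 ≠ s3 := fun h => key p t2 t3 ha2 ha3 e23 s2 ms2 (by rw [h]; exact ms3) g2.ne'
    have hN : ∀ y, GG.Adj (b p) y → y = a' ∨ y = c ∨ y = d := fun y hy => hNa y (hba ▸ hy)
    have is1 := hN s1 g1
    have is2 := hN s2 g2
    have is3 := hN s3 g3
    have cov := three_cover d12 d13 d23 is1 is2 is3 (y := a') (Or.inl rfl)
    -- the generic inner step, done for each of the three cases
    -- case: a' = s_i for walk (cons g_i q_i) : from b p
    rcases cov with ea | ea | ea
    · -- a' = s1
      obtain ⟨z, gz, q1', hq1'⟩ := walk_cons q1 (by rw [← ea]; exact fun h => hnot t1 h.symm)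
      have hzq1 : z ∈ q1.support := by
        rw [hq1', support_cons]; exact List.mem_cons_of_mem _ q1'.start_mem_support
      have hp1 : (SimpleGraph.Walk.cons g1 q1).IsPath := by rw [← hq1]; exact hpath p t1 ha1
      have hza : z ≠ b p := fun h =>
        ((SimpleGraph.Walk.cons_isPath_iff g1 q1).1 hp1).2 (h ▸ hzq1)
      have hz' : GG.Adj a' z := by rw [ea]; exact gz
      have hzopts : z = a' ∨ z = c ∨ z = d := by
        rcases hNa' z hz' with h | h | h
        · exact absurd (h.trans hba.symm) hza
        · exact Or.inr (Or.inl h)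
        · exact Or.inr (Or.inr h)
      have hzne : z ≠ a' := by rw [ea]; exact gz.ne'
      have hzmem : z ∈ (P p t1 ha1).support := by
        rw [hq1, support_cons]; exact List.mem_cons_of_mem _ hzq1
      rcases three_cover d12 d13 d23 is1 is2 is3 hzopts with h | h | h
      · exact hzne (h.trans ea.symm)
      · exact key p t1 t2 ha1 ha2 e12 z hzmem (by rw [h]; exact ms2) hza
      · exact key p t1 t3 ha1 ha3 e13 z hzmem (by rw [h]; exact ms3) hza
    · -- a' = s2
      obtain ⟨z, gz, q2', hq2'⟩ := walk_cons q2 (by rw [← ea]; exact fun h => hnot t2 h.symm)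
      have hzq2 : z ∈ q2.support := by
        rw [hq2', support_cons]; exact List.mem_cons_of_mem _ q2'.start_mem_support
      have hp2 : (SimpleGraph.Walk.cons g2 q2).IsPath := by rw [← hq2]; exact hpath p t2 ha2
      have hza : z ≠ b p := fun h =>
        ((SimpleGraph.Walk.cons_isPath_iff g2 q2).1 hp2).2 (h ▸ hzq2)
      have hz' : GG.Adj a' z := by rw [ea]; exact gz
      have hzopts : z = a' ∨ z = c ∨ z = d := by
        rcases hNa' z hz' with h | h | h
        · exact absurd (h.trans hba.symm) hza
        · exact Or.inr (Or.inl h)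
        · exact Or.inr (Or.inr h)
      have hzne : z ≠ a' := by rw [ea]; exact gz.ne'
      have hzmem : z ∈ (P p t2 ha2).support := by
        rw [hq2, support_cons]; exact List.mem_cons_of_mem _ hzq2
      rcases three_cover d12 d13 d23 is1 is2 is3 hzopts with h | h | h
      · exact key p t2 t1 ha2 ha1 (Ne.symm e12) z hzmem (by rw [h]; exact ms1) hza
      · exact hzne (h.trans ea.symm)
      · exact key p t2 t3 ha2 ha3 e23 z hzmem (by rw [h]; exact ms3) hza
    · -- a' = s3
      obtain ⟨z, gz, q3', hq3'⟩ := walk_cons q3 (by rw [← ea]; exact fun h => hnot t3 h.symm)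
      have hzq3 : z ∈ q3.support := by
        rw [hq3', support_cons]; exact List.mem_cons_of_mem _ q3'.start_mem_support
      have hp3 : (SimpleGraph.Walk.cons g3 q3).IsPath := by rw [← hq3]; exact hpath p t3 ha3
      have hza : z ≠ b p := fun h =>
        ((SimpleGraph.Walk.cons_isPath_iff g3 q3).1 hp3).2 (h ▸ hzq3)
      have hz' : GG.Adj a' z := by rw [ea]; exact gz
      have hzopts : z = a' ∨ z = c ∨ z = d := by
        rcases hNa' z hz' with h | h | h
        · exact absurd (h.trans hba.symm) hza
        · exact Or.inr (Or.inl h)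
        · exact Or.inr (Or.inr h)
      have hzne : z ≠ a' := by rw [ea]; exact gz.ne'
      have hzmem : z ∈ (P p t3 ha3).support := by
        rw [hq3, support_cons]; exact List.mem_cons_of_mem _ hzq3
      rcases three_cover d12 d13 d23 is1 is2 is3 hzopts with h | h | h
      · exact key p t3 t1 ha3 ha1 (Ne.symm e13) z hzmem (by rw [h]; exact ms1) hza
      · exact key p t3 t2 ha3 ha2 (Ne.symm e23) z hzmem (by rw [h]; exact ms2) hza
      · exact hzne (h.trans ea.symm)
  -- surjectivity onto the complement of two missed vertices
  have missTwo : ∀ (m1 m2 : V8), Fintype.card {y : V8 // y ≠ m1 ∧ y ≠ m2} = 6 →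
      (¬ ∃ r, b r = m1) → (¬ ∃ r, b r = m2) →
      ∀ x : V8, x ≠ m1 → x ≠ m2 → ∃ t, b t = x := by
    intro m1 m2 hcard hm1 hm2 x hx1 hx2
    let f : K → {y : V8 // y ≠ m1 ∧ y ≠ m2} :=
      fun t => ⟨b t, fun h => hm1 ⟨t, h⟩, fun h => hm2 ⟨t, h⟩⟩
    have hf : Function.Injective f := fun a b h => hinj (congrArg Subtype.val h)
    have hcK : Fintype.card K = Fintype.card {y : V8 // y ≠ m1 ∧ y ≠ m2} := by
      rw [hcard]; decide
    obtain ⟨t, ht⟩ := ((Fintype.bijective_iff_injective_and_card f).2 ⟨hf, hcK⟩).2 ⟨x, hx1, hx2⟩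
    exact ⟨t, congrArg Subtype.val ht⟩
  by_cases h1 : ∃ p, b p = U1
  · obtain ⟨p, hp⟩ := h1
    by_cases h2 : ∃ q, b q = U2
    · obtain ⟨q, hq⟩ := h2
      have hNp : ∀ y, GG.Adj (b p) y → y = U2 ∨ y = Vv1 ∨ y = Vv2 :=
        fun y hy => nU1 y (hp ▸ hy)
      have hNq : ∀ y, GG.Adj (b q) y → y = U1 ∨ y = Vv1 ∨ y = Vv2 :=
        fun y hy => nU2 y (hq ▸ hy)
      have hpq : H33.Adj p q := adjOf p q _ _ _ hNp (by rw [hp, hq]; decide)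
      have hv1 : ¬ ∃ r, b r = Vv1 := by
        rintro ⟨r, hr⟩
        exact tri_free p q r hpq (adjOf q r _ _ _ hNq (by rw [hq, hr]; decide))
          (adjOf p r _ _ _ hNp (by rw [hp, hr]; decide))
      have hv2 : ¬ ∃ r, b r = Vv2 := by
        rintro ⟨r, hr⟩
        exact tri_free p q r hpq (adjOf q r _ _ _ hNq (by rw [hq, hr]; decide))
          (adjOf p r _ _ _ hNp (by rw [hp, hr]; decide))
      obtain ⟨px, hpx⟩ := missTwo Vv1 Vv2 (by decide) hv1 hv2 X1 (by decide) (by decide)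
      obtain ⟨qx, hqx⟩ := missTwo Vv1 Vv2 (by decide) hv1 hv2 X2 (by decide) (by decide)
      obtain ⟨rx, hrx⟩ := missTwo Vv1 Vv2 (by decide) hv1 hv2 W1 (by decide) (by decide)
      have hNpx : ∀ y, GG.Adj (b px) y → y = X2 ∨ y = W1 ∨ y = W2 :=
        fun y hy => nX1 y (hpx ▸ hy)
      have hNqx : ∀ y, GG.Adj (b qx) y → y = X1 ∨ y = W1 ∨ y = W2 :=
        fun y hy => nX2 y (hqx ▸ hy)
      exact tri_free px qx rx (adjOf px qx _ _ _ hNpx (by rw [hpx, hqx]; decide))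
        (adjOf qx rx _ _ _ hNqx (by rw [hqx, hrx]; decide))
        (adjOf px rx _ _ _ hNpx (by rw [hpx, hrx]; decide))
    · exact stepB p U1 U2 Vv1 Vv2 hp (fun t ht => h2 ⟨t, ht⟩) nU1 nU2
  · by_cases h2 : ∃ q, b q = U2
    · obtain ⟨q, hq⟩ := h2
      exact stepB q U2 U1 Vv1 Vv2 hq (fun t ht => h1 ⟨t, ht⟩) nU2 nU1
    · obtain ⟨px, hpx⟩ := missTwo U1 U2 (by decide) h1 h2 X1 (by decide) (by decide)
      obtain ⟨qx, hqx⟩ := missTwo U1 U2 (by decide) h1 h2 X2 (by decide) (by decide)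
      obtain ⟨rx, hrx⟩ := missTwo U1 U2 (by decide) h1 h2 W1 (by decide) (by decide)
      have hNpx : ∀ y, GG.Adj (b px) y → y = X2 ∨ y = W1 ∨ y = W2 :=
        fun y hy => nX1 y (hpx ▸ hy)
      have hNqx : ∀ y, GG.Adj (b qx) y → y = X1 ∨ y = W1 ∨ y = W2 :=
        fun y hy => nX2 y (hqx ▸ hy)
      exact tri_free px qx rx (adjOf px qx _ _ _ hNpx (by rw [hpx, hqx]; decide))
        (adjOf qx rx _ _ _ hNqx (by rw [hqx, hrx]; decide))
        (adjOf px rx _ _ _ hNpx (by rw [hpx, hrx]; decide))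

theorem noK5 : ¬ ContainsSubdivision GG H5 := by
  rintro ⟨b, P, hinj, hpath, hbranch, hdisj⟩
  have key : ∀ (p t t' : Fin 5) (ht : H5.Adj p t) (ht' : H5.Adj p t'), t ≠ t' →
      ∀ z, z ∈ (P p t ht).support → z ∈ (P p t' ht').support → z ≠ b p → False := by
    intro p t t' ht ht' htt' z hz hz' hzp
    have hsym : s(p,t) ≠ s(p,t') := by
      intro hs
      rcases Sym2.eq_iff.mp hs with ⟨-, h⟩ | ⟨h1, -⟩
      · exact htt' h
      · exact ht'.ne h1
    obtain ⟨hA, hB⟩ := hdisj p t p t' ht ht' hsym z hz hz'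
    simp only [Set.mem_insert_iff, Set.mem_singleton_iff] at hA hB
    rcases hA with hA | hA
    · exact hzp hA
    rcases hB with hB | hB
    · exact hzp hB
    exact htt' (hinj (hA.symm.trans hB))
  have class4 : ∀ p : Fin 5, b p = Vv1 ∨ b p = Vv2 ∨ b p = W1 ∨ b p = W2 := by
    intro p
    obtain ⟨ha1, ha2, ha3, ha4, e12, e13, e14, e23, e24, e34⟩ := nbrs5 p
    obtain ⟨s1, g1, q1, hq1⟩ := walk_cons (P p (p+1) ha1) (hinj.ne ha1.ne)
    obtain ⟨s2, g2, q2, hq2⟩ := walk_cons (P p (p+2) ha2) (hinj.ne ha2.ne)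
    obtain ⟨s3, g3, q3, hq3⟩ := walk_cons (P p (p+3) ha3) (hinj.ne ha3.ne)
    obtain ⟨s4, g4, q4, hq4⟩ := walk_cons (P p (p+4) ha4) (hinj.ne ha4.ne)
    have ms1 : s1 ∈ (P p (p+1) ha1).support := by
      rw [hq1, support_cons]; exact List.mem_cons_of_mem _ q1.start_mem_support
    have ms2 : s2 ∈ (P p (p+2) ha2).support := by
      rw [hq2, support_cons]; exact List.mem_cons_of_mem _ q2.start_mem_support
    have ms3 : s3 ∈ (P p (p+3) ha3).support := by
      rw [hq3, support_cons]; exact List.mem_cons_of_mem _ q3.start_mem_support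
    have ms4 : s4 ∈ (P p (p+4) ha4).support := by
      rw [hq4, support_cons]; exact List.mem_cons_of_mem _ q4.start_mem_support
    have d12 : s1 ≠ s2 := fun h => key p _ _ ha1 ha2 e12 s1 ms1 (by rw [h]; exact ms2) g1.ne'
    have d13 : s1 ≠ s3 := fun h => key p _ _ ha1 ha3 e13 s1 ms1 (by rw [h]; exact ms3) g1.ne'
    have d14 : s1 ≠ s4 := fun h => key p _ _ ha1 ha4 e14 s1 ms1 (by rw [h]; exact ms4) g1.ne'
    have d23 : s2 ≠ s3 := fun h => key p _ _ ha2 ha3 e23 s2 ms2 (by rw [h]; exact ms3) g2.ne'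
    have d24 : s2 ≠ s4 := fun h => key p _ _ ha2 ha4 e24 s2 ms2 (by rw [h]; exact ms4) g2.ne'
    have d34 : s3 ≠ s4 := fun h => key p _ _ ha3 ha4 e34 s3 ms3 (by rw [h]; exact ms4) g3.ne'
    have hsub : ({s1, s2, s3, s4} : Finset V8) ⊆ GG.neighborFinset (b p) := by
      intro y hy
      simp only [Finset.mem_insert, Finset.mem_singleton] at hy
      rw [SimpleGraph.mem_neighborFinset]
      rcases hy with rfl | rfl | rfl | rfl
      exacts [g1, g2, g3, g4]
    have hcard : ({s1, s2, s3, s4} : Finset V8).card = 4 := by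
      rw [Finset.card_insert_of_notMem (by simp [d12, d13, d14]),
        Finset.card_insert_of_notMem (by simp [d23, d24]),
        Finset.card_insert_of_notMem (by simp [d34]), Finset.card_singleton]
    have hdeg : 4 ≤ GG.degree (b p) := by
      have h := Finset.card_le_card hsub
      rw [hcard] at h
      exact h
    exact deg_class (b p) hdeg
  let f : Fin 5 → {y : V8 // y = Vv1 ∨ y = Vv2 ∨ y = W1 ∨ y = W2} :=
    fun p => ⟨b p, class4 p⟩
  have hf : Function.Injective f := fun a b h => hinj (congrArg Subtype.val h)
  have := Fintype.card_le_of_injective f hf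
  rw [show Fintype.card {y : V8 // y = Vv1 ∨ y = Vv2 ∨ y = W1 ∨ y = W2} = 4 from by decide,
    Fintype.card_fin] at this
  omega

end Stmt12Aux

theorem stmt12 : IsPlanar (idemGraph (ZMod 2 × ZMod 4)) :=
  ⟨Stmt12Aux.noK5, Stmt12Aux.noK33⟩
end

section
/- Let R be any finite non-local commutative ring with unity. Then the idempotent graph G_Id(R) is not outerplanar. -/
open SimpleGraph

/-! ### Auxiliary lemmas -/

lemma exists_pow_idem {M : Type*} [Monoid M] [Finite M] (a : M) :
    ∃ n, 0 < n ∧ IsIdempotentElem (a ^ n) := by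
  obtain ⟨i, j, hij, h⟩ := Finite.exists_ne_map_eq_of_infinite (fun n : ℕ => a ^ (n + 1))
  wlog hlt : i < j generalizing i j
  · exact this j i hij.symm h.symm (by omega)
  set m := i + 1 with hm
  obtain ⟨d, hd, hjd⟩ : ∃ d, 0 < d ∧ j + 1 = m + d := ⟨j - i, by omega, by omega⟩
  have hkey : ∀ t, m ≤ t → a ^ (t + d) = a ^ t := by
    intro t ht
    obtain ⟨s, rfl⟩ := Nat.exists_eq_add_of_le ht
    have : a ^ (m + d) = a ^ m := by rw [← hjd, ← h]
    calc a ^ (m + s + d) = a ^ (m + d) * a ^ s := by rw [← pow_add]; ring_nf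
      _ = a ^ m * a ^ s := by rw [this]
      _ = a ^ (m + s) := by rw [← pow_add]
  have hrep : ∀ k, a ^ (m * d + k * d) = a ^ (m * d) := by
    intro k
    induction k with
    | zero => simp
    | succ k ih =>
      have : m * d + (k + 1) * d = (m * d + k * d) + d := by ring
      rw [this, hkey _ (by nlinarith), ih]
  refine ⟨m * d, by positivity, ?_⟩
  unfold IsIdempotentElem
  rw [← pow_add]
  calc a ^ (m * d + m * d) = a ^ (m * d) := by rw [hrep m]

lemma exists_nontrivial_idem {R : Type*} [CommRing R] [Fintype R]
    {m₁ m₂ : Ideal R} (h₁ : m₁.IsMaximal) (h₂ : m₂.IsMaximal) (hne : m₁ ≠ m₂) :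
    ∃ e : R, IsIdempotentElem e ∧ e ≠ 0 ∧ e ≠ 1 := by
  have hsup : m₁ ⊔ m₂ = ⊤ := h₁.coprime_of_ne h₂ hne
  have h1mem : (1 : R) ∈ m₁ ⊔ m₂ := by rw [hsup]; trivial
  obtain ⟨a, ha, b, hb, hab⟩ := Submodule.mem_sup.mp h1mem
  obtain ⟨n, hn, hidem⟩ := exists_pow_idem a
  refine ⟨a ^ n, hidem, ?_, ?_⟩
  · intro h0
    have hb0 : Ideal.Quotient.mk m₂ b = 0 := Ideal.Quotient.eq_zero_iff_mem.mpr hb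
    have : (Ideal.Quotient.mk m₂ a) = 1 := by
      have h' := congrArg (Ideal.Quotient.mk m₂) hab
      rw [map_add, hb0, add_zero, map_one] at h'
      exact h'
    have h2 : ((Ideal.Quotient.mk m₂) a) ^ n = 0 := by
      rw [← map_pow, h0, map_zero]
    rw [this, one_pow] at h2
    exact one_ne_zero (α := R ⧸ m₂) h2
  · intro h1
    have : a ^ n ∈ m₁ := Ideal.pow_mem_of_mem m₁ ha n hn
    rw [h1] at this
    exact h₁.ne_top (Ideal.eq_top_iff_one m₁ |>.mpr this)

lemma idem_adj {R : Type*} [Ring R] {x y : R} (h : x ≠ y) (hi : IsIdempotentElem (x + y)) :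
    (idemGraph R).Adj x y := ⟨h, hi⟩

lemma side_path {R : Type*} [CommRing R] {e f : R}
    (he : IsIdempotentElem e) (hf : IsIdempotentElem f) (hef1 : e + f = 1)
    (he0 : e ≠ 0) (he1 : e ≠ 1) (hef : e ≠ f) (h01 : (0 : R) ≠ 1) :
    ∃ W : (idemGraph R).Walk e 1, W.IsPath ∧
      ∀ x ∈ W.support, x = e ∨ x = 1 ∨ (x = -e ∧ x ∉ ({0, e, f, 1} : Set R)) := by
  by_cases h2 : e + e = 0
  · -- direct edge e — 1
    have he' : e * e = e := he
    have hidem : IsIdempotentElem (e + 1) := by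
      show (e + 1) * (e + 1) = e + 1
      linear_combination he' + h2
    refine ⟨(idem_adj he1 hidem).toWalk, (SimpleGraph.Path.singleton (idem_adj he1 hidem)).2, ?_⟩
    intro x hx
    simp only [SimpleGraph.Adj.toWalk, SimpleGraph.Walk.support_cons,
      SimpleGraph.Walk.support_nil, List.mem_cons, List.not_mem_nil, or_false,
      List.mem_singleton] at hx
    tauto
  · -- path e — (-e) — 1
    have hne1 : e ≠ -e := fun h => h2 (by linear_combination h)
    have hne2 : (-e : R) ≠ 1 := by
      intro h
      have : e = -1 := by linear_combination -h
      apply he1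
      calc e = e * e := he.symm
        _ = 1 := by rw [this]; ring
    have a1 : (idemGraph R).Adj e (-e) := idem_adj hne1 (by simp [IsIdempotentElem])
    have a2 : (idemGraph R).Adj (-e) 1 := by
      refine idem_adj hne2 ?_
      have : -e + 1 = f := by linear_combination -hef1
      rw [this]; exact hf
    refine ⟨SimpleGraph.Walk.cons a1 a2.toWalk, ?_, ?_⟩
    · rw [SimpleGraph.Walk.cons_isPath_iff]
      refine ⟨(SimpleGraph.Path.singleton a2).2, ?_⟩
      simp only [SimpleGraph.Adj.toWalk, SimpleGraph.Walk.support_cons,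
        SimpleGraph.Walk.support_nil, List.mem_cons, List.not_mem_nil, or_false,
        List.mem_singleton]
      push_neg
      exact ⟨hne1, he1⟩
    · intro x hx
      simp only [SimpleGraph.Adj.toWalk, SimpleGraph.Walk.support_cons,
        SimpleGraph.Walk.support_nil, List.mem_cons, List.not_mem_nil, or_false,
        List.mem_singleton] at hx
      rcases hx with rfl | rfl | rfl
      · exact Or.inl rfl
      · refine Or.inr (Or.inr ⟨rfl, ?_⟩)
        simp only [Set.mem_insert_iff, Set.mem_singleton_iff]
        push_neg
        refine ⟨fun h => he0 (by linear_combination -h), fun h => hne1 h.symm, ?_, hne2⟩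
        intro h
        exact h01 (by linear_combination hef1 + h)
      · exact Or.inr (Or.inl rfl)

def mkW {V : Type*} (G : SimpleGraph V) (v : Fin 4 → V)
    (e01 : G.Walk (v 0) (v 1)) (e02 : G.Walk (v 0) (v 2)) (e03 : G.Walk (v 0) (v 3))
    (e12 : G.Walk (v 1) (v 2)) (e13 : G.Walk (v 1) (v 3)) (e23 : G.Walk (v 2) (v 3)) :
    ∀ u w : Fin 4, (completeGraph (Fin 4)).Adj u w → G.Walk (v u) (v w) := fun u w h =>
  match u, w with
  | ⟨0,_⟩, ⟨1,_⟩ => e01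
  | ⟨0,_⟩, ⟨2,_⟩ => e02
  | ⟨0,_⟩, ⟨3,_⟩ => e03
  | ⟨1,_⟩, ⟨0,_⟩ => e01.reverse
  | ⟨1,_⟩, ⟨2,_⟩ => e12
  | ⟨1,_⟩, ⟨3,_⟩ => e13
  | ⟨2,_⟩, ⟨0,_⟩ => e02.reverse
  | ⟨2,_⟩, ⟨1,_⟩ => e12.reverse
  | ⟨2,_⟩, ⟨3,_⟩ => e23
  | ⟨3,_⟩, ⟨0,_⟩ => e03.reverse
  | ⟨3,_⟩, ⟨1,_⟩ => e13.reverse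
  | ⟨3,_⟩, ⟨2,_⟩ => e23.reverse
  | ⟨0,_⟩, ⟨0,_⟩ => absurd rfl h
  | ⟨1,_⟩, ⟨1,_⟩ => absurd rfl h
  | ⟨2,_⟩, ⟨2,_⟩ => absurd rfl h
  | ⟨3,_⟩, ⟨3,_⟩ => absurd rfl h

set_option linter.unreachableTactic false in
set_option linter.unusedTactic false in
set_option maxHeartbeats 2000000 in
lemma k4_subdiv {V : Type*} (G : SimpleGraph V) (v : Fin 4 → V)
    (hinj : Function.Injective v)
    (h01 : G.Adj (v 0) (v 1)) (h02 : G.Adj (v 0) (v 2)) (h03 : G.Adj (v 0) (v 3))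
    (h12 : G.Adj (v 1) (v 2))
    (W13 : G.Walk (v 1) (v 3)) (W23 : G.Walk (v 2) (v 3))
    (hp13 : W13.IsPath) (hp23 : W23.IsPath)
    (hb13 : ∀ i, v i ∈ W13.support → i = 1 ∨ i = 3)
    (hb23 : ∀ i, v i ∈ W23.support → i = 2 ∨ i = 3)
    (hcross : ∀ x, x ∈ W13.support → x ∈ W23.support → x = v 3) :
    ContainsSubdivision G (completeGraph (Fin 4)) := by
  have n013 : v 0 ∉ W13.support := fun hmem => absurd (hb13 0 hmem) (by decide)
  have n213 : v 2 ∉ W13.support := fun hmem => absurd (hb13 2 hmem) (by decide)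
  have n023 : v 0 ∉ W23.support := fun hmem => absurd (hb23 0 hmem) (by decide)
  have n123 : v 1 ∉ W23.support := fun hmem => absurd (hb23 1 hmem) (by decide)
  refine ⟨v, mkW G v h01.toWalk h02.toWalk h03.toWalk h12.toWalk W13 W23, hinj, ?_, ?_, ?_⟩
  · intro u w h
    fin_cases u <;> fin_cases w <;>
      first
      | exact absurd rfl h
      | (simp only [mkW];
         first
         | exact hp13 | exact hp13.reverse | exact hp23 | exact hp23.reverse
         | exact (SimpleGraph.Path.singleton h01).2
         | exact (SimpleGraph.Path.singleton h01).2.reverse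
         | exact (SimpleGraph.Path.singleton h02).2
         | exact (SimpleGraph.Path.singleton h02).2.reverse
         | exact (SimpleGraph.Path.singleton h03).2
         | exact (SimpleGraph.Path.singleton h03).2.reverse
         | exact (SimpleGraph.Path.singleton h12).2
         | exact (SimpleGraph.Path.singleton h12).2.reverse)
  · intro u w h i hi
    fin_cases u <;> fin_cases w <;>
      first
      | exact absurd rfl h
      | (simp only [mkW, Walk.support_reverse, List.mem_reverse,
          SimpleGraph.Adj.toWalk, Walk.support_cons, Walk.support_nil, List.mem_cons,
          List.mem_singleton, List.not_mem_nil, or_false] at hi;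
         first
         | exact hb13 i hi
         | exact (hb13 i hi).symm
         | exact hb23 i hi
         | exact (hb23 i hi).symm
         | (rcases hi with hi | hi <;>
            first | exact Or.inl (hinj hi) | exact Or.inr (hinj hi)))
  · intro u w u' w' h h' hne x hx hx'
    fin_cases u <;> fin_cases w <;>
      first
      | exact absurd rfl h
      | (fin_cases u' <;> fin_cases w' <;>
         first
         | exact absurd rfl h'
         | exact absurd rfl hne
         | exact absurd Sym2.eq_swap hne
         | (simp only [mkW, Walk.support_reverse, List.mem_reverse,
              SimpleGraph.Adj.toWalk, Walk.support_cons, Walk.support_nil, List.mem_cons,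
              List.mem_singleton, List.not_mem_nil, or_false] at hx hx';
            simp only [Set.mem_inter_iff, Set.mem_insert_iff, Set.mem_singleton_iff];
            first
            | tauto
            | (rcases hx' with rfl | rfl <;>
               first | exact absurd hx n013 | exact absurd hx n213
                     | exact absurd hx n023 | exact absurd hx n123 | tauto)
            | (rcases hx with rfl | rfl <;>
               first | exact absurd hx' n013 | exact absurd hx' n213
                     | exact absurd hx' n023 | exact absurd hx' n123 | tauto)
            | (rcases hcross x hx hx' with rfl; tauto)
            | (rcases hcross x hx' hx with rfl; tauto)))

lemma vec_inj {R : Type*} [CommRing R] {e f : R} (h1 : (0:R) ≠ e) (h2 : (0:R) ≠ f)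
    (h3 : (0:R) ≠ 1) (h4 : e ≠ f) (h5 : e ≠ 1) (h6 : f ≠ 1) :
    Function.Injective (![0, e, f, 1] : Fin 4 → R) := by
  intro i j hij
  fin_cases i <;> fin_cases j <;> simp_all

lemma k4_of_idem {R : Type*} [CommRing R] {e : R} (he : IsIdempotentElem e)
    (he0 : e ≠ 0) (he1 : e ≠ 1) (h01 : (0 : R) ≠ 1) :
    ContainsSubdivision (idemGraph R) (completeGraph (Fin 4)) := by
  obtain ⟨f, hfdef⟩ : ∃ f : R, f = 1 - e := ⟨_, rfl⟩
  have he' : e * e = e := he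
  have hf : IsIdempotentElem f := by rw [hfdef]; exact he.one_sub
  have hef1 : e + f = 1 := by rw [hfdef]; ring
  have hf0 : f ≠ 0 := fun h => he1 (by linear_combination hfdef - h)
  have hf1 : f ≠ 1 := fun h => he0 (by linear_combination hfdef - h)
  have hef : e ≠ f := by
    intro h
    exact he0 (by linear_combination e * h + e * hfdef - 2 * he')
  obtain ⟨W13, hp13, hs13⟩ := side_path he hf hef1 he0 he1 hef h01
  obtain ⟨W23, hp23, hs23⟩ := side_path hf he (by linear_combination hef1) hf0 hf1 hef.symm h01
  have hv0 : (![0, e, f, 1] : Fin 4 → R) 0 = 0 := rfl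
  have hv1 : (![0, e, f, 1] : Fin 4 → R) 1 = e := rfl
  have hv2 : (![0, e, f, 1] : Fin 4 → R) 2 = f := rfl
  have hv3 : (![0, e, f, 1] : Fin 4 → R) 3 = 1 := rfl
  have hrange : ∀ i : Fin 4, (![0, e, f, 1] : Fin 4 → R) i ∈ ({0, e, f, 1} : Set R) := by
    intro i; fin_cases i <;> simp
  have hrange' : ∀ i : Fin 4, (![0, e, f, 1] : Fin 4 → R) i ∈ ({0, f, e, 1} : Set R) := by
    intro i; fin_cases i <;> simp
  have hinj : Function.Injective (![0, e, f, 1] : Fin 4 → R) :=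
    vec_inj he0.symm hf0.symm h01 hef he1 hf1
  refine k4_subdiv (idemGraph R) ![0, e, f, 1] hinj ?_ ?_ ?_ ?_ W13 W23 hp13 hp23 ?_ ?_ ?_
  · rw [hv0, hv1]; exact idem_adj he0.symm (by rw [zero_add]; exact he)
  · rw [hv0, hv2]; exact idem_adj hf0.symm (by rw [zero_add]; exact hf)
  · rw [hv0, hv3]; exact idem_adj h01 (by rw [zero_add]; exact IsIdempotentElem.one)
  · rw [hv1, hv2]; exact idem_adj hef (by rw [hef1]; exact IsIdempotentElem.one)
  · intro i hi
    rcases hs13 _ hi with h | h | ⟨_, hnot⟩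
    · exact Or.inl (hinj (h.trans hv1.symm))
    · exact Or.inr (hinj (h.trans hv3.symm))
    · exact absurd (hrange i) hnot
  · intro i hi
    rcases hs23 _ hi with h | h | ⟨_, hnot⟩
    · exact Or.inl (hinj (h.trans hv2.symm))
    · exact Or.inr (hinj (h.trans hv3.symm))
    · exact absurd (hrange' i) hnot
  · intro x hx hx'
    rcases hs13 _ hx with h13 | h13 | ⟨h13, hnot⟩
    · rcases hs23 _ hx' with h | h | ⟨h, hnot'⟩
      · exact absurd (h13.symm.trans h) hef
      · exact absurd (h13.symm.trans h) he1
      · exact absurd (by rw [h13]; simp : x ∈ ({0, f, e, 1} : Set R)) hnot'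
    · exact h13.trans hv3.symm
    · rcases hs23 _ hx' with h | h | ⟨h, hnot'⟩
      · exact absurd (show (0 : R) = 1 by linear_combination hef1 + h - h13) h01
      · exact h.trans hv3.symm
      · exact absurd (neg_inj.mp (h13.symm.trans h)) hef

theorem stmt14 {R : Type*} [CommRing R] [Fintype R]
    (hnonlocal : ∃ m₁ m₂ : Ideal R, m₁.IsMaximal ∧ m₂.IsMaximal ∧ m₁ ≠ m₂) :
    ¬ IsOuterplanar (idemGraph R) := by
  obtain ⟨m₁, m₂, h₁, h₂, hne⟩ := hnonlocal
  haveI : Nontrivial R := by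
    rcases subsingleton_or_nontrivial R with hs | hn
    · exact absurd (Subsingleton.elim m₁ ⊤) h₁.ne_top
    · exact hn
  obtain ⟨e, he, he0, he1⟩ := exists_nontrivial_idem h₁ h₂ hne
  intro hOP
  exact hOP.1 (k4_of_idem he he0 he1 zero_ne_one)
end

section
/- Let R be a ring with unity. Then (R, +) is generated by Id(R) and R has no nontrivial idempotents (Id(R) = {0, 1}) if and only if the idempotent graph G_Id(R) is a path graph. -/
/-- A path graph: connected, acyclic, and every vertex has at most two
neighbours. -/
def IsPathGraph {V : Type*} (G : SimpleGraph V) : Prop :=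
  G.Connected ∧ G.IsAcyclic ∧
    ∀ v a b c : V, G.Adj v a → G.Adj v b → G.Adj v c → a = b ∨ a = c ∨ b = c

open SimpleGraph

/-- The start of a cycle has two distinct neighbours on the cycle. -/
lemma cycle_start_two_neighbors {V : Type*} {G : SimpleGraph V} {v : V} {c : G.Walk v v}
    (hc : c.IsCycle) :
    ∃ a b, a ≠ b ∧ G.Adj v a ∧ G.Adj v b ∧ a ∈ c.support ∧ b ∈ c.support := by
  cases c with
  | nil => exact absurd hc Walk.IsCycle.not_of_nil
  | @cons _ a _ h p =>
    rw [Walk.cons_isCycle_iff] at hc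
    cases hp : p.reverse with
    | nil => exact absurd h (G.loopless.irrefl v)
    | @cons _ b _ h2 q =>
      refine ⟨a, b, ?_, h, h2, ?_, ?_⟩
      · rintro rfl
        apply hc.2
        have : s(v, a) ∈ p.reverse.edges := by rw [hp]; simp
        rwa [Walk.edges_reverse, List.mem_reverse] at this
      · simp
      · have : b ∈ p.reverse.support := by rw [hp]; simp
        rw [Walk.support_reverse, List.mem_reverse] at this
        simp [this]

/-- Any vertex on a cycle has two distinct neighbours on the cycle. -/
lemma cycle_two_neighbors {V : Type*} {G : SimpleGraph V} {v u : V} {c : G.Walk v v}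
    (hc : c.IsCycle) (hu : u ∈ c.support) :
    ∃ a b, a ≠ b ∧ G.Adj u a ∧ G.Adj u b ∧ a ∈ c.support ∧ b ∈ c.support := by
  classical
  obtain ⟨a, b, hab, ha, hb, ha', hb'⟩ := cycle_start_two_neighbors (hc.rotate hu)
  have hs := Walk.support_rotate c u hu
  have key : ∀ x, x ∈ (c.rotate u hu).support → x ∈ c.support := by
    intro x hx
    rcases (Walk.mem_support_iff _).mp hx with rfl | hx
    · exact hu
    · have : x ∈ c.support.tail := hs.mem_iff.mp hx
      exact (Walk.mem_support_iff _).mpr (Or.inr this)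
  exact ⟨a, b, hab, ha, hb, key a ha', key b hb'⟩

/-- A preconnected graph with max degree ≤ 2 containing a vertex of degree ≤ 1
is acyclic. -/
lemma acyclic_of_maxdeg {V : Type*} {G : SimpleGraph V}
    (hconn : G.Preconnected)
    (hdeg : ∀ v a b c : V, G.Adj v a → G.Adj v b → G.Adj v c → a = b ∨ a = c ∨ b = c)
    (v0 : V) (hv0 : ∀ a b, G.Adj v0 a → G.Adj v0 b → a = b) :
    G.IsAcyclic := by
  intro v c hc
  -- the support of the cycle is closed under adjacency
  have closed : ∀ u w, u ∈ c.support → G.Adj u w → w ∈ c.support := by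
    intro u w hu huw
    obtain ⟨a, b, hab, ha, hb, ha', hb'⟩ := cycle_two_neighbors hc hu
    rcases hdeg u a b w ha hb huw with h | h | h
    · exact absurd h hab
    · exact h ▸ ha'
    · exact h ▸ hb'
  -- hence v0 lies on the cycle
  have hv0mem : v0 ∈ c.support := by
    obtain ⟨w⟩ := hconn v v0
    have : ∀ {x y : V} (p : G.Walk x y), x ∈ c.support → y ∈ c.support := by
      intro x y p
      induction p with
      | nil => exact id
      | cons h p ih => exact fun hx => ih (closed _ _ hx h)
    exact this w c.start_mem_support
  obtain ⟨a, b, hab, ha, hb, _, _⟩ := cycle_two_neighbors hc hv0mem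
  exact hab (hv0 a b ha hb)

lemma idem_zero {R : Type*} [Ring R] : IsIdempotentElem (0 : R) := by
  simp [IsIdempotentElem]

lemma idem_one {R : Type*} [Ring R] : IsIdempotentElem (1 : R) := by
  simp [IsIdempotentElem]

/-- Reachability step in the idempotent graph. -/
lemma reach_step {R : Type*} [Ring R] {x y : R}
    (h : IsIdempotentElem (x + y)) (hx : (idemGraph R).Reachable 0 x) :
    (idemGraph R).Reachable 0 y := by
  by_cases hxy : x = y
  · exact hxy ▸ hx
  · exact hx.trans (Adj.reachable ⟨hxy, h⟩)

lemma reach_nat {R : Type*} [Ring R] (n : ℕ) :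
    (idemGraph R).Reachable 0 (n • (1 : R)) ∧ (idemGraph R).Reachable 0 (-(n • (1 : R))) := by
  induction n with
  | zero => simp [Reachable.refl]
  | succ n ih =>
    have h1 : (idemGraph R).Reachable 0 ((n + 1) • (1 : R)) := by
      apply reach_step (x := -(n • (1 : R))) _ ih.2
      have : -(n • (1:R)) + (n+1) • (1:R) = 1 := by
        rw [succ_nsmul]; abel
      rw [this]; exact idem_one
    refine ⟨h1, ?_⟩
    apply reach_step (x := (n + 1) • (1 : R)) _ h1
    rw [add_neg_cancel]; exact idem_zero

theorem stmt16 {R : Type*} [Ring R] :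
    (AddSubgroup.closure (idemSet R) = ⊤ ∧ idemSet R = {0, 1}) ↔
      IsPathGraph (idemGraph R) := by
  constructor
  · rintro ⟨hcl, hset⟩
    have hmem : ∀ x y : R, (idemGraph R).Adj x y → x + y = 0 ∨ x + y = 1 := by
      intro x y ⟨_, hi⟩
      have : x + y ∈ idemSet R := hi
      rw [hset] at this
      simpa using this
    have hdeg : ∀ v a b c : R, (idemGraph R).Adj v a → (idemGraph R).Adj v b →
        (idemGraph R).Adj v c → a = b ∨ a = c ∨ b = c := by
      intro v a b c ha hb hc
      rcases hmem v a ha with h1 | h1 <;> rcases hmem v b hb with h2 | h2 <;>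
        rcases hmem v c hc with h3 | h3 <;>
        first
        | exact Or.inl (add_left_cancel (h1.trans h2.symm))
        | exact Or.inr (Or.inl (add_left_cancel (h1.trans h3.symm)))
        | exact Or.inr (Or.inr (add_left_cancel (h2.trans h3.symm)))
    have hpre : (idemGraph R).Preconnected := by
      have hx : ∀ x : R, (idemGraph R).Reachable 0 x := by
        intro x
        have hx1 : x ∈ AddSubgroup.closure ({(1 : R)} : Set R) := by
          have : AddSubgroup.closure (idemSet R) ≤ AddSubgroup.closure ({(1 : R)} : Set R) := by
            rw [AddSubgroup.closure_le, hset]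
            rintro y (rfl | rfl)
            · exact zero_mem _
            · exact AddSubgroup.subset_closure rfl
          exact this (hcl ▸ AddSubgroup.mem_top x)
        obtain ⟨n, hn⟩ := AddSubgroup.mem_closure_singleton.mp hx1
        rcases le_or_gt 0 n with hp | hp
        · have : x = n.toNat • (1 : R) := by
            rw [← hn]
            rw [← natCast_zsmul]
            congr 1
            omega
          exact this ▸ (reach_nat n.toNat).1
        · have : x = -((-n).toNat • (1 : R)) := by
            rw [← hn, ← natCast_zsmul, ← neg_smul]
            congr 1
            omega
          exact this ▸ (reach_nat (-n).toNat).2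
      exact fun x y => (hx x).symm.trans (hx y)
    haveI : Nonempty R := ⟨0⟩
    refine ⟨SimpleGraph.Connected.mk hpre, ?_, hdeg⟩
    · apply acyclic_of_maxdeg hpre hdeg 0
      intro a b ha hb
      rcases hmem 0 a ha with h1 | h1 <;> rcases hmem 0 b hb with h2 | h2
      · exact absurd (by simpa using h1) ha.1.symm
      · exact absurd (by simpa using h1) ha.1.symm
      · exact absurd (by simpa using h2) hb.1.symm
      · have := h1.trans h2.symm; simpa using this
  · rintro ⟨hconn, hacyc, hdeg⟩
    by_cases h01 : (0 : R) = 1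
    · have hsub : Subsingleton R := subsingleton_of_zero_eq_one h01
      constructor
      · exact Subsingleton.elim _ _
      · ext x
        simp only [Set.mem_insert_iff, Set.mem_singleton_iff]
        constructor
        · intro _; exact Or.inl (Subsingleton.elim _ _)
        · intro _
          show IsIdempotentElem x
          have hx0 : x = 0 := Subsingleton.elim _ _
          rw [hx0]; exact idem_zero
    · constructor
      · -- closure = ⊤ from connectivity
        rw [eq_top_iff]
        intro x _
        have : ∀ {u v : R} (_ : (idemGraph R).Walk u v),
            u ∈ AddSubgroup.closure (idemSet R) → v ∈ AddSubgroup.closure (idemSet R) := by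
          intro u v p
          induction p with
          | nil => exact id
          | @cons a b c h p ih =>
            intro ha
            apply ih
            have hsum : a + b ∈ AddSubgroup.closure (idemSet R) :=
              AddSubgroup.subset_closure h.2
            have hb : b = (a + b) - a := (add_sub_cancel_left a b).symm
            exact hb ▸ sub_mem hsum ha
        obtain ⟨w⟩ := hconn.preconnected 0 x
        exact this w (zero_mem _)
      · -- idempotents are exactly 0 and 1
        ext e
        simp only [Set.mem_insert_iff, Set.mem_singleton_iff]
        constructor
        · intro he
          by_contra hne
          push_neg at hne
          obtain ⟨he0, he1⟩ := hne
          have he' : IsIdempotentElem e := he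
          -- e ≠ 1 - e
          have hhalf : e ≠ 1 - e := by
            intro h
            have h2 : e + e = 1 := by
              nth_rewrite 2 [h]
              abel
            apply h01
            have : (1 : R) = 1 + 1 := by
              calc (1 : R) = (e + e) * (e + e) := by rw [h2, one_mul]
                _ = e * e + e * e + (e * e + e * e) := by noncomm_ring
                _ = e + e + (e + e) := by rw [he']
                _ = 1 + 1 := by rw [h2]
            have : (0 : R) + 1 = 1 + 1 := by rw [zero_add]; exact this
            exact add_right_cancel this
          -- build a triangle 0 — e — (1 - e) — 0
          have h1e : IsIdempotentElem (1 - e) := by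
            unfold IsIdempotentElem at *
            calc (1 - e) * (1 - e) = 1 - e - e + e * e := by noncomm_ring
              _ = 1 - e := by rw [he']; abel
          have a1 : (idemGraph R).Adj 0 e := ⟨Ne.symm he0, by rwa [zero_add]⟩
          have a2 : (idemGraph R).Adj e (1 - e) := by
            refine ⟨hhalf, ?_⟩
            have h : e + (1 - e) = 1 := by abel
            rw [h]; exact idem_one
          have a3 : (idemGraph R).Adj (1 - e) 0 := by
            refine ⟨?_, ?_⟩
            · intro h
              rw [sub_eq_zero] at h
              exact he1 h.symm
            · rwa [add_zero]
          have hcyc : (Walk.cons a1 (Walk.cons a2 (Walk.cons a3 Walk.nil))).IsCycle := by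
            rw [Walk.cons_isCycle_iff]
            constructor
            · rw [Walk.isPath_def]
              simp only [Walk.support_cons, Walk.support_nil]
              refine List.nodup_cons.2 ⟨?_, List.nodup_cons.2 ⟨?_, List.nodup_singleton _⟩⟩
              · simp only [List.mem_cons, List.mem_singleton, List.not_mem_nil]
                push_neg
                exact ⟨hhalf, he0, trivial⟩
              · simp only [List.mem_singleton, List.not_mem_nil]
                push_neg
                exact a3.1
            · simp only [Walk.edges_cons, Walk.edges_nil, List.mem_cons, List.not_mem_nil]
              push_neg
              refine ⟨?_, ?_, trivial⟩
              · intro h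
                rw [Sym2.eq_iff] at h
                rcases h with ⟨h, _⟩ | ⟨h, _⟩
                · exact he0 h.symm
                · exact a3.1 h.symm
              · intro h
                rw [Sym2.eq_iff] at h
                rcases h with ⟨h, _⟩ | ⟨_, h⟩
                · exact a3.1 h.symm
                · exact hhalf h
          exact hacyc _ hcyc
        · rintro (rfl | rfl)
          · exact idem_zero
          · exact idem_one
end

section
/- Let R = Z_2 × Z_2 × Z_3. Then G_Id(R) contains no induced path on four vertices (G_Id(R) is a cograph), but G_Id(R) is not a split graph since it contains an induced 2K_2. -/
instance {R : Type*} [Ring R] [DecidableEq R] (x y : R) :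
    Decidable ((idemGraph R).Adj x y) :=
  inferInstanceAs (Decidable (x ≠ y ∧ (x + y) * (x + y) = x + y))

lemma not_split_of_2K2 {V : Type*} (G : SimpleGraph V) (a b c d : V)
    (hab : G.Adj a b) (hcd : G.Adj c d)
    (hac : ¬ G.Adj a c) (had : ¬ G.Adj a d) (hbc : ¬ G.Adj b c) (hbd : ¬ G.Adj b d)
    (nac : a ≠ c) (nad : a ≠ d) (nbc : b ≠ c) (nbd : b ≠ d) :
    ¬ IsSplitGraph G := by
  rintro ⟨C, I, hdisj, hcover, hclq, hind⟩
  have mem : ∀ v : V, v ∈ C ∨ v ∈ I := fun v => by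
    have := Set.mem_univ v
    rw [← hcover] at this
    exact this
  have h1 : a ∈ C ∨ b ∈ C := by
    rcases mem a with h | h
    · exact Or.inl h
    rcases mem b with h' | h'
    · exact Or.inr h'
    · exact absurd hab (hind h h' hab.ne)
  have h2 : c ∈ C ∨ d ∈ C := by
    rcases mem c with h | h
    · exact Or.inl h
    rcases mem d with h' | h'
    · exact Or.inr h'
    · exact absurd hcd (hind h h' hcd.ne)
  rcases h1 with h1 | h1 <;> rcases h2 with h2 | h2
  · exact hac (hclq h1 h2 nac)
  · exact had (hclq h1 h2 nad)
  · exact hbc (hclq h1 h2 nbc)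
  · exact hbd (hclq h1 h2 nbd)

set_option synthInstance.maxSize 400
set_option maxHeartbeats 2000000

theorem stmt18 :
    IsCograph (idemGraph (ZMod 2 × ZMod 2 × ZMod 3)) ∧
    (∃ a b c d : ZMod 2 × ZMod 2 × ZMod 3,
      (idemGraph (ZMod 2 × ZMod 2 × ZMod 3)).Adj a b ∧
      (idemGraph (ZMod 2 × ZMod 2 × ZMod 3)).Adj c d ∧
      a ≠ c ∧ a ≠ d ∧ b ≠ c ∧ b ≠ d ∧
      ¬ (idemGraph (ZMod 2 × ZMod 2 × ZMod 3)).Adj a c ∧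
      ¬ (idemGraph (ZMod 2 × ZMod 2 × ZMod 3)).Adj a d ∧
      ¬ (idemGraph (ZMod 2 × ZMod 2 × ZMod 3)).Adj b c ∧
      ¬ (idemGraph (ZMod 2 × ZMod 2 × ZMod 3)).Adj b d) ∧
    ¬ IsSplitGraph (idemGraph (ZMod 2 × ZMod 2 × ZMod 3)) := by
  have hpair : (idemGraph (ZMod 2 × ZMod 2 × ZMod 3)).Adj (0,0,0) (1,0,0) ∧
      (idemGraph (ZMod 2 × ZMod 2 × ZMod 3)).Adj (0,0,2) (1,0,2) ∧
      ((0,0,0) : ZMod 2 × ZMod 2 × ZMod 3) ≠ (0,0,2) ∧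
      ((0,0,0) : ZMod 2 × ZMod 2 × ZMod 3) ≠ (1,0,2) ∧
      ((1,0,0) : ZMod 2 × ZMod 2 × ZMod 3) ≠ (0,0,2) ∧
      ((1,0,0) : ZMod 2 × ZMod 2 × ZMod 3) ≠ (1,0,2) ∧
      ¬ (idemGraph (ZMod 2 × ZMod 2 × ZMod 3)).Adj (0,0,0) (0,0,2) ∧
      ¬ (idemGraph (ZMod 2 × ZMod 2 × ZMod 3)).Adj (0,0,0) (1,0,2) ∧
      ¬ (idemGraph (ZMod 2 × ZMod 2 × ZMod 3)).Adj (1,0,0) (0,0,2) ∧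
      ¬ (idemGraph (ZMod 2 × ZMod 2 × ZMod 3)).Adj (1,0,0) (1,0,2) := by decide
  obtain ⟨hab, hcd, nac, nad, nbc, nbd, hac, had, hbc, hbd⟩ := hpair
  refine ⟨by unfold IsCograph; decide, ⟨_, _, _, _, hab, hcd, nac, nad, nbc, nbd, hac, had, hbc, hbd⟩, ?_⟩
  exact not_split_of_2K2 _ _ _ _ _ hab hcd hac had hbc hbd nac nad nbc nbd
end

section
/- Let R be a finite commutative ring with unity such that char(R_1) = 2 for some local factor in a decomposition R ≅ R_1 × R_2 × ⋯ × R_n with n ≥ 3. Then the four vertices (0,0,…,0), (1,0,…,0), (1,1,0,…,0), (0,0,1,0,…,0) of G_Id(R) induce a complete graph K_4; in particular G_Id(R) is not outerplanar. -/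
theorem stmt19 {n : ℕ} (hn : 3 ≤ n) (R : Fin n → Type*) [∀ i, CommRing (R i)]
    [∀ i, IsLocalRing (R i)] [∀ i, Fintype (R i)]
    (hchar : (1 : R ⟨0, by omega⟩) + 1 = 0) :
    (let G := idemGraph (∀ i, R i)
     let i0 : Fin n := ⟨0, by omega⟩
     let i1 : Fin n := ⟨1, by omega⟩
     let i2 : Fin n := ⟨2, by omega⟩
     let v0 : ∀ i, R i := 0
     let v1 := Pi.single i0 (1 : R i0)
     let v2 := Pi.single i0 (1 : R i0) + Pi.single i1 (1 : R i1)
     let v3 := Pi.single i2 (1 : R i2)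
     ∃ f : Fin 4 → (∀ i, R i), f 0 = v0 ∧ f 1 = v1 ∧ f 2 = v2 ∧ f 3 = v3 ∧
       Function.Injective f ∧ ∀ i j, i ≠ j → G.Adj (f i) (f j)) ∧
    ¬ IsOuterplanar (idemGraph (∀ i, R i)) := by

  have hn0 : 0 < n := by omega
  have hn1 : 1 < n := by omega
  have hn2 : 2 < n := by omega
  set j0 : Fin n := ⟨0, hn0⟩ with hj0
  set j1 : Fin n := ⟨1, hn1⟩ with hj1
  set j2 : Fin n := ⟨2, hn2⟩ with hj2
  have ne01 : j0 ≠ j1 := by simp [hj0, hj1, Fin.ext_iff]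
  have ne02 : j0 ≠ j2 := by simp [hj0, hj2, Fin.ext_iff]
  have ne12 : j1 ≠ j2 := by simp [hj1, hj2, Fin.ext_iff]
  have hchar' : (1 : R j0) + 1 = 0 := hchar
  set w1 : ∀ i, R i := Pi.single j0 1 with hw1
  set w2 : ∀ i, R i := Pi.single j0 1 + Pi.single j1 1 with hw2
  set w3 : ∀ i, R i := Pi.single j2 1 with hw3
  set G' := idemGraph (∀ i, R i) with hG'
  -- idempotency criterion
  have idem : ∀ x : ∀ i, R i, (∀ k, x k = 0 ∨ x k = 1) → IsIdempotentElem x := by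
    intro x h
    show x * x = x
    funext k
    rcases h k with h | h <;> simp [h]
  -- pairwise distinctness
  have d01 : (0 : ∀ i, R i) ≠ w1 := by
    intro h; have := congrFun h j0; simp [hw1, Pi.single_eq_same] at this
  have d02 : (0 : ∀ i, R i) ≠ w2 := by
    intro h; have := congrFun h j1
    simp [hw2, Pi.single_eq_same, Pi.single_eq_of_ne ne01.symm] at this
  have d03 : (0 : ∀ i, R i) ≠ w3 := by
    intro h; have := congrFun h j2; simp [hw3, Pi.single_eq_same] at this
  have d12 : w1 ≠ w2 := by
    intro h; have := congrFun h j1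
    simp [hw1, hw2, Pi.single_eq_same, Pi.single_eq_of_ne ne01.symm] at this
  have d13 : w1 ≠ w3 := by
    intro h; have := congrFun h j0
    simp [hw1, hw3, Pi.single_eq_same, Pi.single_eq_of_ne ne02] at this
  have d23 : w2 ≠ w3 := by
    intro h; have := congrFun h j2
    simp [hw2, hw3, Pi.single_eq_same, Pi.single_eq_of_ne ne02.symm,
      Pi.single_eq_of_ne ne12.symm] at this
  -- idempotency of all pairwise sums
  have s01 : IsIdempotentElem ((0 : ∀ i, R i) + w1) := by
    apply idem; intro k
    by_cases hk : k = j0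
    · subst hk; simp [hw1, Pi.single_eq_same]
    · simp [hw1, Pi.single_eq_of_ne hk]
  have s02 : IsIdempotentElem ((0 : ∀ i, R i) + w2) := by
    apply idem; intro k
    by_cases hk : k = j0
    · subst hk; simp [hw2, Pi.single_eq_same, Pi.single_eq_of_ne ne01]
    · by_cases hk1 : k = j1
      · subst hk1; simp [hw2, Pi.single_eq_same, Pi.single_eq_of_ne hk]
      · simp [hw2, Pi.single_eq_of_ne hk, Pi.single_eq_of_ne hk1]
  have s03 : IsIdempotentElem ((0 : ∀ i, R i) + w3) := by
    apply idem; intro k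
    by_cases hk : k = j2
    · subst hk; simp [hw3, Pi.single_eq_same]
    · simp [hw3, Pi.single_eq_of_ne hk]
  have s12 : IsIdempotentElem (w1 + w2) := by
    apply idem; intro k
    by_cases hk : k = j0
    · subst hk; left
      simp [hw1, hw2, Pi.single_eq_same, Pi.single_eq_of_ne ne01, hchar']
    · by_cases hk1 : k = j1
      · subst hk1
        simp [hw1, hw2, Pi.single_eq_same, Pi.single_eq_of_ne hk]
      · simp [hw1, hw2, Pi.single_eq_of_ne hk, Pi.single_eq_of_ne hk1]
  have s13 : IsIdempotentElem (w1 + w3) := by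
    apply idem; intro k
    by_cases hk : k = j0
    · subst hk; simp [hw1, hw3, Pi.single_eq_same, Pi.single_eq_of_ne ne02]
    · by_cases hk2 : k = j2
      · subst hk2; simp [hw1, hw3, Pi.single_eq_same, Pi.single_eq_of_ne hk]
      · simp [hw1, hw3, Pi.single_eq_of_ne hk, Pi.single_eq_of_ne hk2]
  have s23 : IsIdempotentElem (w2 + w3) := by
    apply idem; intro k
    by_cases hk : k = j0
    · subst hk
      simp [hw2, hw3, Pi.single_eq_same, Pi.single_eq_of_ne ne01,
        Pi.single_eq_of_ne ne02]
    · by_cases hk1 : k = j1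
      · subst hk1
        simp [hw2, hw3, Pi.single_eq_same, Pi.single_eq_of_ne ne01.symm,
          Pi.single_eq_of_ne ne12]
      · by_cases hk2 : k = j2
        · subst hk2
          simp [hw2, hw3, Pi.single_eq_same, Pi.single_eq_of_ne hk,
            Pi.single_eq_of_ne hk1]
        · simp [hw2, hw3, Pi.single_eq_of_ne hk, Pi.single_eq_of_ne hk1,
            Pi.single_eq_of_ne hk2]
  -- adjacency facts
  have A01 : G'.Adj 0 w1 := ⟨d01, s01⟩
  have A02 : G'.Adj 0 w2 := ⟨d02, s02⟩
  have A03 : G'.Adj 0 w3 := ⟨d03, s03⟩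
  have A12 : G'.Adj w1 w2 := ⟨d12, s12⟩
  have A13 : G'.Adj w1 w3 := ⟨d13, s13⟩
  have A23 : G'.Adj w2 w3 := ⟨d23, s23⟩
  set f : Fin 4 → (∀ i, R i) := ![0, w1, w2, w3] with hf
  have hinj : Function.Injective f := by
    intro a b hab
    fin_cases a <;> fin_cases b <;>
      first
        | rfl
        | exact absurd hab d01 | exact absurd hab.symm d01
        | exact absurd hab d02 | exact absurd hab.symm d02
        | exact absurd hab d03 | exact absurd hab.symm d03
        | exact absurd hab d12 | exact absurd hab.symm d12
        | exact absurd hab d13 | exact absurd hab.symm d13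
        | exact absurd hab d23 | exact absurd hab.symm d23
  have hadj : ∀ a b : Fin 4, a ≠ b → G'.Adj (f a) (f b) := by
    intro a b hab
    fin_cases a <;> fin_cases b <;>
      first
        | exact absurd rfl hab
        | exact A01 | exact A01.symm
        | exact A02 | exact A02.symm
        | exact A03 | exact A03.symm
        | exact A12 | exact A12.symm
        | exact A13 | exact A13.symm
        | exact A23 | exact A23.symm
  constructor
  · intro G i0 i1 i2 v0 v1 v2 v3
    refine ⟨f, rfl, rfl, rfl, rfl, hinj, hadj⟩
  · rintro ⟨hK4, -⟩
    apply hK4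
    refine ⟨f, fun u v h => SimpleGraph.Walk.cons (hadj u v h) SimpleGraph.Walk.nil,
      hinj, ?_, ?_, ?_⟩
    · intro u v h
      simp [SimpleGraph.Walk.isPath_def, (hadj u v h).ne]
    · intro u v h w hw
      simp only [SimpleGraph.Walk.support_cons, SimpleGraph.Walk.support_nil,
        List.mem_cons, List.mem_singleton, List.not_mem_nil, or_false] at hw
      rcases hw with hw | hw
      · exact Or.inl (hinj hw)
      · exact Or.inr (hinj hw)
    · intro u v u' v' h h' hs x hx hx'
      simp only [SimpleGraph.Walk.support_cons, SimpleGraph.Walk.support_nil,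
        List.mem_cons, List.mem_singleton, List.not_mem_nil, or_false] at hx hx'
      simp only [Set.mem_inter_iff, Set.mem_insert_iff, Set.mem_singleton_iff]
      exact ⟨hx, hx'⟩
end
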